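/- arXiv:2405.01072 — 5 statements merged into one kernel-verified Lean document; each statement's English description precedes it below -/
import Mathlib

section
/- Let $(N_1,\ldots,N_H)$ follow a multinomial distribution with $n$ trials and equal cell probabilities $1/H$, with $d_n = \#\{r: N_r>0\}$ and $W_r = \mathbb{I}(N_r>0)/d_n$. Then $\mathrm{Var}(W_r) = \frac{1}{H^2}\sum_{l=1}^{H-1} (l/H)^{n-1}$ for each $r$. -/
open MeasureTheory ProbabilityTheory
open scoped ENNReal

namespace JPSProof

open Finset

/-! ### Combinatorial definitions -/

def occ {n H : ℕ} (y : Fin n → Fin H) : Finset (Fin H) := Finset.image y Finset.univ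

noncomputable def wc {n H : ℕ} (r : Fin H) (y : Fin n → Fin H) : ℝ :=
  if r ∈ occ y then ((occ y).card : ℝ)⁻¹ else 0

def B {H : ℕ} (S : Finset (Fin H)) (b : Fin H) : Finset (Equiv.Perm (Fin H)) :=
  Finset.univ.filter fun σ => ∀ s ∈ S, σ s ≤ σ b

variable {n H k : ℕ}

lemma occ_nonempty (hn : 0 < n) (y : Fin n → Fin H) : (occ y).Nonempty :=
  ⟨y ⟨0, hn⟩, Finset.mem_image_of_mem y (Finset.mem_univ _)⟩

lemma card_occ_pos (hn : 0 < n) (y : Fin n → Fin H) : 0 < (occ y).card :=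
  Finset.card_pos.2 (occ_nonempty hn y)

lemma sum_wc (hn : 0 < n) (y : Fin n → Fin H) : ∑ r, wc r y = 1 := by
  unfold wc
  rw [Finset.sum_ite_mem, Finset.univ_inter, Finset.sum_const, nsmul_eq_mul,
    mul_inv_cancel₀]
  exact_mod_cast (card_occ_pos hn y).ne'

lemma sum_wc_sq (hn : 0 < n) (y : Fin n → Fin H) :
    ∑ r, (wc r y) ^ 2 = ((occ y).card : ℝ)⁻¹ := by
  unfold wc
  simp only [ite_pow, zero_pow (two_ne_zero)]
  rw [Finset.sum_ite_mem, Finset.univ_inter, Finset.sum_const, nsmul_eq_mul]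
  have h0 : ((occ y).card : ℝ) ≠ 0 := by
    exact_mod_cast (card_occ_pos hn y).ne'
  field_simp

lemma occ_comp (σ : Equiv.Perm (Fin H)) (y : Fin n → Fin H) :
    occ (σ ∘ y) = (occ y).image σ := by
  simp [occ, Finset.image_image]

lemma wc_comp (σ : Equiv.Perm (Fin H)) (r : Fin H) (y : Fin n → Fin H) :
    wc r (σ ∘ y) = wc (σ.symm r) y := by
  unfold wc
  rw [occ_comp, Finset.card_image_of_injective _ σ.injective]
  have hmem : (r ∈ (occ y).image σ) ↔ (σ.symm r ∈ occ y) := by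
    constructor
    · rintro h
      rcases Finset.mem_image.1 h with ⟨x, hx, rfl⟩
      simpa using hx
    · intro h
      exact Finset.mem_image.2 ⟨σ.symm r, h, by simp⟩
  exact if_congr hmem rfl rfl

lemma sum_apply_wc (F : ℝ → ℝ) (r r' : Fin H) :
    ∑ y : Fin n → Fin H, F (wc r y) = ∑ y : Fin n → Fin H, F (wc r' y) := by
  refine Fintype.sum_equiv (Equiv.piCongrRight fun _ : Fin n => Equiv.swap r' r)
    _ _ fun y => ?_
  have : ((Equiv.piCongrRight fun _ : Fin n => Equiv.swap r' r) y)
      = (Equiv.swap r' r : Equiv.Perm (Fin H)) ∘ y := rfl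
  rw [this, wc_comp]
  simp [Equiv.symm_swap, Equiv.swap_apply_left]

/-! ### Counting permutations by maximal element -/

lemma card_B_eq (S : Finset (Fin H)) {b b' : Fin H} (hb : b ∈ S) (hb' : b' ∈ S) :
    (B S b).card = (B S b').card := by
  have hswap : ∀ s ∈ S, Equiv.swap b b' s ∈ S := by
    intro s hs
    rcases eq_or_ne s b with rfl | h1
    · simpa [Equiv.swap_apply_left] using hb'
    rcases eq_or_ne s b' with rfl | h2
    · simpa [Equiv.swap_apply_right] using hb
    · rwa [Equiv.swap_apply_of_ne_of_ne h1 h2]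
  have key : ∀ σ : Equiv.Perm (Fin H), σ ∈ B S b ↔ σ * Equiv.swap b b' ∈ B S b' := by
    intro σ
    simp only [B, mem_filter, mem_univ, true_and]
    constructor
    · intro h s hs
      have : (σ * Equiv.swap b b') b' = σ b := by simp [Equiv.swap_apply_right]
      rw [this]
      exact h _ (hswap s hs)
    · intro h s hs
      have hs' : Equiv.swap b b' s ∈ S := hswap s hs
      have := h _ hs'
      simpa [Equiv.swap_apply_right, Equiv.swap_apply_self] using this
  refine Finset.card_bij' (fun σ _ => σ * Equiv.swap b b') (fun τ _ => τ * Equiv.swap b b')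
    ?_ ?_ ?_ ?_
  · intro σ hσ; exact (key σ).1 hσ
  · intro τ hτ
    have : (τ * Equiv.swap b b') * Equiv.swap b b' = τ := by
      rw [mul_assoc, Equiv.swap_mul_self, mul_one]
    have h2 := key (τ * Equiv.swap b b')
    rw [this] at h2
    exact h2.2 hτ
  · intro σ _
    show σ * Equiv.swap b b' * Equiv.swap b b' = σ
    rw [mul_assoc, Equiv.swap_mul_self, mul_one]
  · intro τ _
    show τ * Equiv.swap b b' * Equiv.swap b b' = τ
    rw [mul_assoc, Equiv.swap_mul_self, mul_one]

lemma card_mul_B (S : Finset (Fin H)) {b : Fin H} (hb : b ∈ S) :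
    S.card * (B S b).card = Nat.factorial H := by
  have hcover : (Finset.univ : Finset (Equiv.Perm (Fin H))) = S.biUnion (B S) := by
    ext σ
    simp only [mem_univ, true_iff, mem_biUnion]
    obtain ⟨m, hm, hmax⟩ := S.exists_max_image (fun s => σ s) ⟨b, hb⟩
    exact ⟨m, hm, by simp only [B, mem_filter, mem_univ, true_and]; exact hmax⟩
  have hdisj : ∀ x ∈ S, ∀ y ∈ S, x ≠ y → Disjoint (B S x) (B S y) := by
    intro x hx y hy hxy
    rw [Finset.disjoint_left]
    intro σ hσx hσy
    simp only [B, mem_filter, mem_univ, true_and] at hσx hσy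
    exact hxy (σ.injective (le_antisymm (hσy x hx) (hσx y hy)))
  have : (Finset.univ : Finset (Equiv.Perm (Fin H))).card = ∑ x ∈ S, (B S x).card := by
    rw [hcover, Finset.card_biUnion hdisj]
  rw [Finset.card_univ, Fintype.card_perm, Fintype.card_fin] at this
  rw [this, Finset.sum_congr rfl (fun x hx => card_B_eq S hx hb), Finset.sum_const,
    smul_eq_mul]

/-! ### The double counting argument -/

lemma filter_eq_B (y : Fin (k+1) → Fin H) :
    (Finset.univ.filter fun σ : Equiv.Perm (Fin H) => ∀ i, σ (y i) ≤ σ (y 0))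
      = B (occ y) (y 0) := by
  ext σ
  simp only [B, mem_filter, mem_univ, true_and]
  constructor
  · intro h s hs
    rcases Finset.mem_image.1 hs with ⟨i, _, rfl⟩
    exact h i
  · intro h i
    exact h _ (Finset.mem_image_of_mem y (mem_univ i))

lemma double_count :
    ∑ y : Fin (k+1) → Fin H, (B (occ y) (y 0)).card
      = Nat.factorial H *
        (Finset.univ.filter fun y : Fin (k+1) → Fin H => ∀ i, y i ≤ y 0).card := by
  calc ∑ y : Fin (k+1) → Fin H, (B (occ y) (y 0)).card
      = ∑ y : Fin (k+1) → Fin H, ∑ σ : Equiv.Perm (Fin H),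
          if ∀ i, σ (y i) ≤ σ (y 0) then 1 else 0 := by
        refine Finset.sum_congr rfl fun y _ => ?_
        rw [← filter_eq_B, Finset.card_filter]
    _ = ∑ σ : Equiv.Perm (Fin H), ∑ y : Fin (k+1) → Fin H,
          if ∀ i, σ (y i) ≤ σ (y 0) then 1 else 0 := Finset.sum_comm
    _ = ∑ _σ : Equiv.Perm (Fin H),
          (Finset.univ.filter fun y : Fin (k+1) → Fin H => ∀ i, y i ≤ y 0).card := by
        refine Finset.sum_congr rfl fun σ _ => ?_
        rw [← Finset.card_filter]
        refine Finset.card_bij' (fun y _ => σ ∘ y) (fun z _ => σ.symm ∘ z) ?_ ?_ ?_ ?_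
        · intro y hy
          simp only [mem_filter, mem_univ, true_and] at hy ⊢
          intro i
          exact hy i
        · intro z hz
          simp only [mem_filter, mem_univ, true_and] at hz ⊢
          intro i
          simpa using hz i
        · intro y _
          funext i
          simp
        · intro z _
          funext i
          simp
    _ = _ := by
        rw [Finset.sum_const, Finset.card_univ, Fintype.card_perm, Fintype.card_fin,
          smul_eq_mul]

lemma count_max :
    (Finset.univ.filter fun y : Fin (k+1) → Fin H => ∀ i, y i ≤ y 0).card
      = ∑ m : Fin H, ((m : ℕ) + 1) ^ k := by
  rw [Finset.card_eq_sum_card_fiberwise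
    (f := fun y : Fin (k+1) → Fin H => y 0) (t := Finset.univ) (fun y _ => mem_univ _)]
  refine Finset.sum_congr rfl fun m _ => ?_
  rw [Finset.filter_filter]
  have hpi : ((Fintype.piFinset fun _ : Fin k => Finset.Iic m)).card = ((m : ℕ) + 1) ^ k := by
    rw [Fintype.card_piFinset]
    simp [Fin.card_Iic]
  rw [← hpi]
  refine Finset.card_bij' (fun y _ => Fin.tail y) (fun t _ => Fin.cons m t) ?_ ?_ ?_ ?_
  · intro y hy
    simp only [mem_filter, mem_univ, true_and] at hy
    refine Fintype.mem_piFinset.2 fun j => ?_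
    rw [Finset.mem_Iic]
    have := hy.1 j.succ
    rwa [hy.2] at this
  · intro t ht
    simp only [mem_filter, mem_univ, true_and]
    refine ⟨fun i => ?_, Fin.cons_zero _ _⟩
    rw [Fin.cons_zero]
    refine Fin.cases ?_ (fun j => ?_) i
    · rw [Fin.cons_zero]
    · rw [Fin.cons_succ]
      exact Finset.mem_Iic.1 (Fintype.mem_piFinset.1 ht j)
  · intro y hy
    simp only [mem_filter, mem_univ, true_and] at hy
    show Fin.cons m (Fin.tail y) = y
    obtain ⟨h1, rfl⟩ := hy
    exact Fin.cons_self_tail y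
  · intro t _
    funext j
    simp [Fin.tail]

/-! ### Real-valued consequences -/

lemma sum_inv_card_occ :
    ∑ y : Fin (k+1) → Fin H, ((occ y).card : ℝ)⁻¹ = ∑ m : Fin H, ((m : ℝ) + 1) ^ k := by
  have hfact : (Nat.factorial H : ℝ) ≠ 0 := by
    exact_mod_cast (Nat.factorial_pos H).ne'
  have hper : ∀ y : Fin (k+1) → Fin H,
      ((occ y).card : ℝ)⁻¹ = ((B (occ y) (y 0)).card : ℝ) / (Nat.factorial H : ℝ) := by
    intro y
    have h := card_mul_B (occ y) (Finset.mem_image_of_mem y (mem_univ (0 : Fin (k+1))))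
    have hc : ((occ y).card : ℝ) ≠ 0 := by
      exact_mod_cast (card_occ_pos (Nat.succ_pos k) y).ne'
    rw [eq_div_iff hfact, inv_mul_eq_div, div_eq_iff hc]
    rw [mul_comm]
    exact_mod_cast h.symm
  rw [Finset.sum_congr rfl fun y _ => hper y, ← Finset.sum_div]
  have hcast : (∑ y : Fin (k+1) → Fin H, ((B (occ y) (y 0)).card : ℝ))
      = (Nat.factorial H : ℝ) * ∑ m : Fin H, ((m : ℝ) + 1) ^ k := by
    have := double_count (k := k) (H := H)
    rw [count_max] at this
    calc (∑ y : Fin (k+1) → Fin H, ((B (occ y) (y 0)).card : ℝ))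
        = ((∑ y : Fin (k+1) → Fin H, (B (occ y) (y 0)).card : ℕ) : ℝ) := by push_cast; rfl
      _ = ((Nat.factorial H * ∑ m : Fin H, ((m : ℕ) + 1) ^ k : ℕ) : ℝ) := by rw [this]
      _ = (Nat.factorial H : ℝ) * ∑ m : Fin H, ((m : ℝ) + 1) ^ k := by push_cast; rfl
  rw [hcast, mul_div_assoc]
  field_simp

lemma sum_wc_all (hn : 0 < n) (r : Fin H) :
    (H : ℝ) * ∑ y : Fin n → Fin H, wc r y = (H : ℝ) ^ n := by
  calc (H : ℝ) * ∑ y : Fin n → Fin H, wc r y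
      = ∑ _r' : Fin H, ∑ y : Fin n → Fin H, wc r y := by
        rw [Finset.sum_const, Finset.card_univ, Fintype.card_fin, nsmul_eq_mul]
    _ = ∑ r' : Fin H, ∑ y : Fin n → Fin H, wc r' y :=
        Finset.sum_congr rfl fun r' _ => sum_apply_wc id r r'
    _ = ∑ y : Fin n → Fin H, ∑ r' : Fin H, wc r' y := Finset.sum_comm
    _ = ∑ _y : Fin n → Fin H, (1 : ℝ) :=
        Finset.sum_congr rfl fun y _ => sum_wc hn y
    _ = (H : ℝ) ^ n := by
        rw [Finset.sum_const, Finset.card_univ, nsmul_eq_mul, mul_one]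
        simp

lemma sum_wc_sq_all (hn : 0 < n) (r : Fin H) :
    (H : ℝ) * ∑ y : Fin n → Fin H, (wc r y) ^ 2
      = ∑ y : Fin n → Fin H, ((occ y).card : ℝ)⁻¹ := by
  calc (H : ℝ) * ∑ y : Fin n → Fin H, (wc r y) ^ 2
      = ∑ _r' : Fin H, ∑ y : Fin n → Fin H, (wc r y) ^ 2 := by
        rw [Finset.sum_const, Finset.card_univ, Fintype.card_fin, nsmul_eq_mul]
    _ = ∑ r' : Fin H, ∑ y : Fin n → Fin H, (wc r' y) ^ 2 :=
        Finset.sum_congr rfl fun r' _ => sum_apply_wc (· ^ 2) r r'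
    _ = ∑ y : Fin n → Fin H, ∑ r' : Fin H, (wc r' y) ^ 2 := Finset.sum_comm
    _ = ∑ y : Fin n → Fin H, ((occ y).card : ℝ)⁻¹ :=
        Finset.sum_congr rfl fun y _ => sum_wc_sq hn y

/-! ### The law of the sample vector -/

lemma law_Y {Ω : Type*} [MeasureSpace Ω] [IsProbabilityMeasure (ℙ : Measure Ω)]
    (X : ℕ → Ω → Fin H)
    (hindep : iIndepFun X ℙ)
    (hunif : ∀ i r, ℙ {ω | X i ω = r} = (H : ℝ≥0∞)⁻¹)
    (y : Fin (k+1) → Fin H) :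
    ℙ {ω | (fun i : Fin (k+1) => X i ω) = y} = (H : ℝ≥0∞)⁻¹ ^ (k+1) := by
  classical
  set ye : ℕ → Fin H := fun i => if h : i < k+1 then y ⟨i, h⟩ else y 0 with hye
  have hset : {ω | (fun i : Fin (k+1) => X i ω) = y}
      = ⋂ i ∈ Finset.range (k+1), X i ⁻¹' {ye i} := by
    ext ω
    simp only [Set.mem_setOf_eq, funext_iff, Set.mem_iInter, Set.mem_preimage,
      Set.mem_singleton_iff, Finset.mem_range]
    constructor
    · intro h i hi
      simp only [hye, dif_pos hi]
      exact h ⟨i, hi⟩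
    · intro h i
      have := h i.val i.isLt
      simp only [hye, dif_pos i.isLt] at this
      exact this
  rw [hset, hindep.measure_inter_preimage_eq_mul (Finset.range (k+1))
    (fun i _ => measurableSet_singleton _)]
  have hval : ∀ i : ℕ, ℙ (X i ⁻¹' {ye i}) = (H : ℝ≥0∞)⁻¹ := fun i => hunif i (ye i)
  rw [Finset.prod_congr rfl fun i _ => hval i, Finset.prod_const, Finset.card_range]

lemma integral_comp_Y {Ω : Type*} [MeasureSpace Ω] [IsProbabilityMeasure (ℙ : Measure Ω)]
    (X : ℕ → Ω → Fin H) (hXmeas : ∀ i, Measurable (X i))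
    (hindep : iIndepFun X ℙ)
    (hunif : ∀ i r, ℙ {ω | X i ω = r} = (H : ℝ≥0∞)⁻¹)
    (g : (Fin (k+1) → Fin H) → ℝ) :
    ∫ ω, g (fun i : Fin (k+1) => X i ω) ∂ℙ
      = ∑ y : Fin (k+1) → Fin H, ((H : ℝ)⁻¹) ^ (k+1) * g y := by
  classical
  have hYmeas : Measurable (fun ω => (fun i : Fin (k+1) => X i ω)) :=
    measurable_pi_iff.2 fun i => hXmeas i
  have hmap : ∫ ω, g (fun i : Fin (k+1) => X i ω) ∂ℙ
      = ∫ y, g y ∂(Measure.map (fun ω (i : Fin (k+1)) => X i ω) ℙ) :=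
    (integral_map hYmeas.aemeasurable (measurable_of_finite g).aestronglyMeasurable).symm
  haveI : IsProbabilityMeasure (Measure.map (fun ω (i : Fin (k+1)) => X i ω) ℙ) :=
    Measure.isProbabilityMeasure_map hYmeas.aemeasurable
  rw [hmap, integral_fintype _]
  refine Finset.sum_congr rfl fun y _ => ?_
  unfold Measure.real
  rw [Measure.map_apply hYmeas (measurableSet_singleton y)]
  have : (fun ω (i : Fin (k+1)) => X i ω) ⁻¹' {y} = {ω | (fun i : Fin (k+1) => X i ω) = y} := by
    ext ω; simp [Set.mem_preimage]
  rw [this, law_Y X hindep hunif y]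
  rw [smul_eq_mul]
  congr 1
  simp
  exact Integrable.of_finite

end JPSProof

/-- Closed form for the variance of the JPS stratum weight `W r`:
`Var (W r) = (1/H^2) * ∑_{l=1}^{H-1} (l/H)^(n-1)`. -/
theorem stmt_3 {Ω : Type*} [MeasureSpace Ω] [IsProbabilityMeasure (ℙ : Measure Ω)]
    (H n : ℕ) (hH : 0 < H) (hn : 1 ≤ n)
    (X : ℕ → Ω → Fin H) (hXmeas : ∀ i, Measurable (X i))
    (hindep : iIndepFun X ℙ)
    (hunif : ∀ i r, ℙ {ω | X i ω = r} = (H : ℝ≥0∞)⁻¹)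
    (N : Fin H → Ω → ℕ)
    (hN : ∀ r ω, N r ω = ((Finset.range n).filter (fun i => X i ω = r)).card)
    (d : Ω → ℕ)
    (hd : ∀ ω, d ω = (Finset.univ.filter (fun r : Fin H => 0 < N r ω)).card)
    (W : Fin H → Ω → ℝ)
    (hW : ∀ r ω, W r ω = if 0 < N r ω then (d ω : ℝ)⁻¹ else 0)
    (r : Fin H) :
    ∫ ω, (W r ω - 1 / H) ^ 2 ∂ℙ
      = (1 / (H : ℝ) ^ 2) * ∑ l ∈ Finset.range (H - 1), (((l : ℝ) + 1) / H) ^ (n - 1) := by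
  classical
  obtain ⟨k, rfl⟩ : ∃ k, n = k + 1 := ⟨n - 1, by omega⟩
  have hn' : 0 < k + 1 := Nat.succ_pos k
  have hHne : (H : ℝ) ≠ 0 := by exact_mod_cast hH.ne'
  -- identify W with the combinatorial weight
  have hiff : ∀ (ω : Ω) (r' : Fin H),
      (0 < N r' ω) ↔ r' ∈ JPSProof.occ (fun i : Fin (k+1) => X i ω) := by
    intro ω r'
    rw [hN, Finset.card_pos]
    constructor
    · rintro ⟨i, hi⟩
      rw [Finset.mem_filter, Finset.mem_range] at hi
      exact Finset.mem_image.2 ⟨⟨i, hi.1⟩, Finset.mem_univ _, hi.2⟩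
    · intro h
      rcases Finset.mem_image.1 h with ⟨i, _, rfl⟩
      exact ⟨i.val, Finset.mem_filter.2 ⟨Finset.mem_range.2 i.isLt, rfl⟩⟩
  have hdo : ∀ ω, d ω = (JPSProof.occ (fun i : Fin (k+1) => X i ω)).card := by
    intro ω
    rw [hd]
    congr 1
    ext r'
    simp only [Finset.mem_filter, Finset.mem_univ, true_and]
    exact hiff ω r'
  have hWo : ∀ ω, W r ω = JPSProof.wc r (fun i : Fin (k+1) => X i ω) := by
    intro ω
    rw [hW r ω]
    unfold JPSProof.wc
    rw [hdo ω]
    exact if_congr (hiff ω r) rfl rfl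
  -- compute the integral as a finite sum
  have h1 : ∫ ω, (W r ω - 1 / (H : ℝ)) ^ 2 ∂ℙ
      = ∑ y : Fin (k+1) → Fin H, ((H : ℝ)⁻¹) ^ (k+1) * (JPSProof.wc r y - 1 / H) ^ 2 := by
    rw [show (fun ω => (W r ω - 1 / (H : ℝ)) ^ 2)
        = fun ω => (fun y => (JPSProof.wc r y - 1 / (H : ℝ)) ^ 2)
            (fun i : Fin (k+1) => X i ω) from funext fun ω => by rw [hWo ω]]
    exact JPSProof.integral_comp_Y (k := k) X hXmeas hindep hunif
      (fun y => (JPSProof.wc r y - 1 / (H : ℝ)) ^ 2)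
  rw [h1]
  -- the key combinatorial sums
  have hA := JPSProof.sum_wc_all (n := k+1) (H := H) hn' r
  have hB := JPSProof.sum_wc_sq_all (n := k+1) (H := H) hn' r
  have hK := JPSProof.sum_inv_card_occ (k := k) (H := H)
  set Sw := ∑ y : Fin (k+1) → Fin H, JPSProof.wc r y with hSwdef
  set Sq := ∑ y : Fin (k+1) → Fin H, (JPSProof.wc r y) ^ 2 with hSqdef
  set K := ∑ m : Fin H, ((m : ℝ) + 1) ^ k with hKdef
  have hSw : Sw = (H : ℝ) ^ k := by
    refine mul_left_cancel₀ hHne ?_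
    rw [hA, pow_succ]
    ring
  have hSq : Sq = K / H := by
    rw [eq_div_iff hHne, mul_comm]
    rw [hB, hK]
  -- expand the square
  have hcard : ((Fintype.card (Fin (k+1) → Fin H) : ℕ) : ℝ) = (H : ℝ) ^ (k+1) := by
    simp [Fintype.card_fun]
  have hexp : ∑ y : Fin (k+1) → Fin H, ((H : ℝ)⁻¹) ^ (k+1) * (JPSProof.wc r y - 1 / H) ^ 2
      = ((H : ℝ)⁻¹) ^ (k+1) * (Sq - 2 * (1 / H) * Sw + (H : ℝ) ^ (k+1) * (1 / H) ^ 2) := by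
    rw [← Finset.mul_sum]
    congr 1
    have hterm : ∀ y : Fin (k+1) → Fin H, (JPSProof.wc r y - 1 / (H : ℝ)) ^ 2
        = (JPSProof.wc r y) ^ 2 - 2 * (1 / H) * JPSProof.wc r y + (1 / H) ^ 2 := by
      intro y; ring
    rw [Finset.sum_congr rfl fun y _ => hterm y]
    rw [Finset.sum_add_distrib, Finset.sum_sub_distrib, ← Finset.mul_sum,
      Finset.sum_const, Finset.card_univ, nsmul_eq_mul, hcard]
  rw [hexp, hSq, hSw]
  -- rewrite K as a sum over `range H` and split off the top term
  have hKsplit : K = (∑ l ∈ Finset.range (H - 1), ((l : ℝ) + 1) ^ k) + (H : ℝ) ^ k := by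
    have h0 : K = ∑ l ∈ Finset.range H, ((l : ℝ) + 1) ^ k := by
      rw [hKdef]
      exact Fin.sum_univ_eq_sum_range (fun l => ((l : ℝ) + 1) ^ k) H
    have h2 : H = (H - 1) + 1 := by omega
    rw [h0]
    conv_lhs => rw [h2, Finset.sum_range_succ]
    congr 1
    have hc : ((H - 1 : ℕ) : ℝ) + 1 = (H : ℝ) := by
      have h1 : (1 : ℕ) ≤ H := hH
      push_cast [Nat.cast_sub h1]
      ring
    rw [hc]
  rw [hKsplit]
  -- final algebra
  have hexp2 : (k + 1) - 1 = k := by omega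
  rw [hexp2]
  have hsum : ∑ l ∈ Finset.range (H - 1), (((l : ℝ) + 1) / H) ^ k
      = (∑ l ∈ Finset.range (H - 1), ((l : ℝ) + 1) ^ k) / (H : ℝ) ^ k := by
    rw [Finset.sum_div]
    exact Finset.sum_congr rfl fun l _ => div_pow _ _ _
  rw [hsum]
  set T := ∑ l ∈ Finset.range (H - 1), ((l : ℝ) + 1) ^ k with hTdef
  have hHpow : (H : ℝ) ^ k ≠ 0 := pow_ne_zero _ hHne
  field_simp
  have hfin : (H : ℝ) * (H : ℝ) ^ k * (H : ℝ)⁻¹ * ((H : ℝ)⁻¹) ^ k = 1 := by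
    rw [inv_pow]; field_simp
  ring
  rw [hfin, one_mul]
end

section
/- Let $\{K_n\}$ be a sequence of CDFs converging weakly to $e(t) = \mathbb{I}(t \geq 0)$, and let $X$ be a random variable with CDF $G$ continuous at $t$. Then $\mathbb{E}[K_n(t - X)] \to G(t)$ as $n \to \infty$. -/
open MeasureTheory Filter

/-- If the CDFs `K n` converge weakly to the unit step `e(t) = 𝕀(t ≥ 0)` and `G` is the
CDF of `μ`, continuous at `t`, then `E[K n (t - X)] → G t`. -/
theorem stmt_7 (K : ℕ → ℝ → ℝ)
    (hmono : ∀ n, Monotone (K n))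
    (hbot : ∀ n, Tendsto (K n) atBot (nhds 0))
    (htop : ∀ n, Tendsto (K n) atTop (nhds 1))
    (hweak : ∀ s : ℝ, s ≠ 0 →
      Tendsto (fun n => K n s) atTop (nhds (if 0 ≤ s then (1 : ℝ) else 0)))
    (μ : Measure ℝ) [IsProbabilityMeasure μ]
    (G : ℝ → ℝ) (hG : ∀ s, G s = (μ (Set.Iic s)).toReal)
    (t : ℝ) (hcont : ContinuousAt G t) :
    Tendsto (fun n => ∫ x, K n (t - x) ∂μ) atTop (nhds (G t)) := by
  -- bounds
  have h0 : ∀ n s, 0 ≤ K n s := by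
    intro n s
    refine le_of_tendsto (hbot n) ?_
    filter_upwards [eventually_le_atBot s] with u hu using hmono n hu
  have h1 : ∀ n s, K n s ≤ 1 := by
    intro n s
    refine ge_of_tendsto (htop n) ?_
    filter_upwards [eventually_ge_atTop s] with u hu using hmono n hu
  -- G equals cdf μ
  have hGcdf : ∀ s, G s = ProbabilityTheory.cdf μ s := by
    intro s; rw [hG, ProbabilityTheory.cdf_eq_real, measureReal_def]
  -- μ {t} = 0
  have hμt : μ {t} = 0 := by
    have hc : ContinuousAt (ProbabilityTheory.cdf μ) t := by
      have : G = fun s => ProbabilityTheory.cdf μ s := funext hGcdf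
      rwa [this] at hcont
    have hll : Function.leftLim (ProbabilityTheory.cdf μ) t
        = ProbabilityTheory.cdf μ t := by
      apply leftLim_eq_of_tendsto
      exact hc.continuousWithinAt.tendsto
    have := (ProbabilityTheory.cdf μ).measure_singleton t
    rw [ProbabilityTheory.measure_cdf] at this
    rw [this, hll, sub_self, ENNReal.ofReal_zero]
  -- dominated convergence
  have key : Tendsto (fun n => ∫ x, K n (t - x) ∂μ) atTop
      (nhds (∫ x, Set.indicator (Set.Iic t) (fun _ => (1:ℝ)) x ∂μ)) := by
    apply tendsto_integral_of_dominated_convergence (fun _ => (1:ℝ))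
    · intro n
      exact ((hmono n).measurable.comp (measurable_const.sub measurable_id)).aestronglyMeasurable
    · exact integrable_const 1
    · intro n
      filter_upwards with x
      rw [Real.norm_eq_abs, abs_of_nonneg (h0 n _)]
      exact h1 n _
    · have : ∀ᵐ x ∂μ, x ≠ t := by
        rw [ae_iff]; simpa using hμt
      filter_upwards [this] with x hx
      have hne : t - x ≠ 0 := sub_ne_zero.mpr (Ne.symm hx)
      have := hweak _ hne
      convert this using 2
      by_cases hxt : x ≤ t
      · rw [Set.indicator_of_mem (Set.mem_Iic.mpr hxt), if_pos (by linarith)]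
      · rw [Set.indicator_of_notMem (by simpa using hxt),
          if_neg (by intro h; exact hxt (by linarith))]
  have : ∫ x, Set.indicator (Set.Iic t) (fun _ => (1:ℝ)) x ∂μ = G t := by
    rw [MeasureTheory.integral_indicator_const _ measurableSet_Iic, hG]
    simp [measureReal_def]
  rwa [this] at key
end

section
/- Let $F$ be a CDF that is three times continuously differentiable with density $f = F'$, let $k$ be a symmetric probability density on $[-a,a]$ with CDF $K$, and let $h > 0$. Then $\int_{-\infty}^{\infty} K\left(\frac{t-x}{h}\right) f(x)\,dx = F(t) + \frac{h^2}{2} f'(t) \int_{-a}^{a} u^2 k(u)\, du + O(h^3)$ as $h \to 0$. -/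
open MeasureTheory Set intervalIntegral

lemma ftc_bound {g G : ℝ → ℝ} (hG : ∀ u, HasDerivAt G (g u) u)
    (hg : Continuous g) {C r : ℝ} (hC : 0 ≤ C) {n : ℕ}
    (hb : ∀ u, |u| ≤ r → |g u| ≤ C * |u| ^ n) :
    ∀ s, |s| ≤ r → |G s - G 0| ≤ C * |s| ^ (n + 1) := by
  intro s hs
  have h1 : ∫ u in (0:ℝ)..s, g u = G s - G 0 :=
    intervalIntegral.integral_eq_sub_of_hasDerivAt (fun x _ => hG x)
      (hg.intervalIntegrable 0 s)
  rw [← h1]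
  have h2 : ∀ x ∈ Set.uIoc (0:ℝ) s, ‖g x‖ ≤ C * |s| ^ n := by
    intro x hx
    have hxs : |x| ≤ |s| := by
      rcases le_total 0 s with h | h
      · rw [Set.uIoc_of_le h] at hx
        rw [abs_le]
        constructor <;> nlinarith [le_abs_self s, neg_abs_le s, hx.1, hx.2]
      · rw [Set.uIoc_of_ge h] at hx
        rw [abs_le]
        constructor <;> nlinarith [le_abs_self s, neg_abs_le s, hx.1, hx.2]
    calc ‖g x‖ ≤ C * |x| ^ n := hb x (hxs.trans hs)
      _ ≤ C * |s| ^ n := by gcongr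
  calc |∫ u in (0:ℝ)..s, g u| ≤ C * |s| ^ n * |s - 0| :=
        intervalIntegral.norm_integral_le_of_norm_le_const h2
    _ = C * |s| ^ (n + 1) := by rw [sub_zero, pow_succ]; ring

lemma taylor3 {F : ℝ → ℝ} (hF : ContDiff ℝ 3 F) (t r M : ℝ) (hM0 : 0 ≤ M)
    (hM : ∀ v, |v| ≤ r → |deriv (deriv (deriv F)) (t + v)| ≤ M) :
    ∀ s, |s| ≤ r →
      |F (t + s) - F t - deriv F t * s - deriv (deriv F) t * s ^ 2 / 2| ≤ M * |s| ^ 3 := by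
  have h3 : ContDiff ℝ (2+1) F := by norm_num; exact hF
  have h2 : ContDiff ℝ (1+1) (deriv F) := by
    have := (contDiff_succ_iff_deriv.mp h3).2.2; norm_num at this ⊢; exact this
  have h1 : ContDiff ℝ (0+1) (deriv (deriv F)) := by
    have := (contDiff_succ_iff_deriv.mp h2).2.2; norm_num at this ⊢; exact this
  have h0 := (contDiff_succ_iff_deriv.mp h1).2.2
  have hdF : Differentiable ℝ F := hF.differentiable (by norm_num)
  have hdf : Differentiable ℝ (deriv F) := (contDiff_succ_iff_deriv.mp h2).1
  have hdf' : Differentiable ℝ (deriv (deriv F)) := (contDiff_succ_iff_deriv.mp h1).1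
  have hcomp : ∀ (g : ℝ → ℝ), Differentiable ℝ g → ∀ u : ℝ,
      HasDerivAt (fun s => g (t + s)) (deriv g (t + u)) u := by
    intro g hg u
    simpa [Function.comp_def] using ((hg (t + u)).hasDerivAt.comp u ((hasDerivAt_id u).const_add t))
  -- Step A
  have stepA : ∀ s, |s| ≤ r →
      |deriv (deriv F) (t + s) - deriv (deriv F) t| ≤ M * |s| ^ (0 + 1) := by
    have := ftc_bound (g := fun s => deriv (deriv (deriv F)) (t + s))
      (G := fun s => deriv (deriv F) (t + s))
      (fun u => hcomp _ hdf' u)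
      (h0.continuous.comp (continuous_const.add continuous_id)) hM0 (n := 0)
      (fun u hu => by simpa using hM u hu)
    simpa using this
  -- Step B
  have stepB : ∀ s, |s| ≤ r →
      |deriv F (t + s) - deriv F t - deriv (deriv F) t * s| ≤ M * |s| ^ (1 + 1) := by
    have := ftc_bound (g := fun s => deriv (deriv F) (t + s) - deriv (deriv F) t)
      (G := fun s => deriv F (t + s) - deriv (deriv F) t * s)
      (fun u => by
        have := (hcomp _ hdf u).sub ((hasDerivAt_id u).const_mul (deriv (deriv F) t))
        simpa [Pi.sub_def] using this)
      (((h2.continuous_deriv (by norm_num)).comp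
        (continuous_const.add continuous_id)).sub continuous_const) hM0 (n := 1)
      (fun u hu => by simpa using stepA u hu)
    intro s hs
    have h := this s hs
    have e : deriv F (t + s) - deriv (deriv F) t * s -
        (deriv F (t + 0) - deriv (deriv F) t * 0)
        = deriv F (t + s) - deriv F t - deriv (deriv F) t * s := by
      simp; ring
    rwa [e] at h
  -- Step C
  have stepC := ftc_bound (g := fun s => deriv F (t + s) - deriv F t - deriv (deriv F) t * s)
    (G := fun s => F (t + s) - deriv F t * s - deriv (deriv F) t * s ^ 2 / 2)
    (fun u => by
      have hd : HasDerivAt (fun s : ℝ => deriv (deriv F) t * s ^ 2 / 2)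
          (deriv (deriv F) t * u) u := by
        have := ((hasDerivAt_pow 2 u).const_mul (deriv (deriv F) t)).div_const 2
        refine this.congr_deriv ?_; push_cast; ring
      have := ((hcomp _ hdF u).sub ((hasDerivAt_id u).const_mul (deriv F t))).sub hd
      refine this.congr_deriv ?_; ring)
    (by
      have c1 : Continuous fun s : ℝ => deriv F (t + s) :=
        (h3.continuous_deriv (by norm_num)).comp (continuous_const.add continuous_id)
      fun_prop)
    hM0 (n := 2) (fun u hu => stepB u hu)
  intro s hs
  have h := stepC s hs
  have e : F (t + s) - deriv F t * s - deriv (deriv F) t * s ^ 2 / 2 -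
      (F (t + 0) - deriv F t * 0 - deriv (deriv F) t * 0 ^ 2 / 2)
      = F (t + s) - F t - deriv F t * s - deriv (deriv F) t * s ^ 2 / 2 := by
    simp; ring
  rw [e] at h
  exact h

lemma Kform (a : ℝ) (ha : 0 < a) (k : ℝ → ℝ) (hsupp : ∀ x, x ∉ Set.Icc (-a) a → k x = 0)
    (hkInt : Integrable k volume)
    (K : ℝ → ℝ) (hK : ∀ s, K s = ∫ x in (-a)..s, k x) (s : ℝ) :
    K s = ∫ u in Set.Ioc (-a) a ∩ Set.Iic s, k u := by
  have haa : (-a : ℝ) ≤ a := by linarith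
  rcases lt_or_ge s (-a) with hs | hs
  · have h1 : Set.Ioc (-a) a ∩ Set.Iic s = ∅ := by
      ext u
      simp only [Set.mem_inter_iff, Set.mem_Ioc, Set.mem_Iic, Set.mem_empty_iff_false,
        iff_false, not_and, and_imp]
      intro h1 _ ; linarith
    rw [h1, setIntegral_empty, hK, intervalIntegral.integral_symm,
      intervalIntegral.integral_of_le hs.le, integral_Ioc_eq_integral_Ioo,
      setIntegral_eq_zero_of_forall_eq_zero, neg_zero]
    intro x hx
    exact hsupp x (by simp only [Set.mem_Icc, not_and, not_le]
                      intro _; rcases hx with ⟨_, h2⟩; linarith)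
  · rcases le_or_gt s a with hs2 | hs2
    · rw [Set.Ioc_inter_Iic, min_eq_right hs2, hK, intervalIntegral.integral_of_le hs]
    · rw [Set.Ioc_inter_Iic, min_eq_left hs2.le, hK]
      have hsplit : (∫ x in (-a)..a, k x) + ∫ x in a..s, k x = ∫ x in (-a)..s, k x :=
        intervalIntegral.integral_add_adjacent_intervals
          (hkInt.intervalIntegrable) (hkInt.intervalIntegrable)
      have hzero : ∫ x in a..s, k x = 0 := by
        rw [intervalIntegral.integral_of_le hs2.le]
        apply setIntegral_eq_zero_of_forall_eq_zero
        intro x hx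
        exact hsupp x (by simp only [Set.mem_Icc, not_and, not_le]
                          intro _; rcases hx with ⟨h1, _⟩; linarith)
      rw [← hsplit, hzero, add_zero, intervalIntegral.integral_of_le haa]

lemma Fint (F f : ℝ → ℝ) (hF : ContDiff ℝ 3 F) (hf : f = deriv F)
    (hFbot : Filter.Tendsto F Filter.atBot (nhds 0))
    (hfint : Integrable f volume) (s : ℝ) :
    ∫ x in Set.Iic s, f x = F s := by
  have hdF : Differentiable ℝ F := hF.differentiable (by norm_num)
  have := integral_Iic_of_hasDerivAt_of_tendsto
    (f := F) (f' := f) (a := s) (m := 0)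
    (hF.continuous.continuousWithinAt)
    (fun x _ => by rw [hf]; exact (hdF x).hasDerivAt)
    (hfint.integrableOn) hFbot
  rw [this, sub_zero]

lemma fubini_step (a : ℝ) (ha : 0 < a) (k : ℝ → ℝ) (hk0 : ∀ x, 0 ≤ k x)
    (hsupp : ∀ x, x ∉ Set.Icc (-a) a → k x = 0)
    (hkInt : Integrable k volume)
    (K : ℝ → ℝ) (hK : ∀ s, K s = ∫ x in (-a)..s, k x)
    (F f : ℝ → ℝ) (hF : ContDiff ℝ 3 F) (hf : f = deriv F)
    (hFbot : Filter.Tendsto F Filter.atBot (nhds 0))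
    (hfint : Integrable f volume) (t h : ℝ) (hh : 0 < h) :
    ∫ x, K ((t - x) / h) * f x = ∫ u in Set.Ioc (-a) a, k u * F (t - h * u) := by
  set ν : Measure ℝ := volume.restrict (Set.Ioc (-a) a) with hν
  have f_cont : Continuous f := by rw [hf]; exact hF.continuous_deriv (by norm_num)
  set W : ℝ × ℝ → ℝ :=
    fun p => ({q : ℝ × ℝ | q.1 ≤ t - h * q.2}).indicator (fun q => k q.2 * f q.1) p with hW
  have hS : MeasurableSet {q : ℝ × ℝ | q.1 ≤ t - h * q.2} :=
    measurableSet_le measurable_fst (measurable_const.sub (measurable_snd.const_mul h))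
  have hWm : AEStronglyMeasurable W (volume.prod ν) :=
    (((hkInt.aestronglyMeasurable.restrict).comp_snd).mul
      (f_cont.aestronglyMeasurable.comp_fst)).indicator hS
  have hWb : Integrable (fun q : ℝ × ℝ => |f q.1| * k q.2) (volume.prod ν) :=
    (hfint.abs).mul_prod hkInt.restrict
  have hWint : Integrable W (volume.prod ν) := by
    refine hWb.mono' hWm (Filter.Eventually.of_forall fun q => ?_)
    rw [hW]
    simp only [Set.indicator_apply]
    split_ifs
    · rw [Real.norm_eq_abs, abs_mul, abs_of_nonneg (hk0 _)]
      rw [mul_comm]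
    · simp [mul_nonneg (abs_nonneg _) (hk0 _)]
  have hWeq : ∀ x u : ℝ, W (x, u) = (Set.Iic ((t - x) / h)).indicator k u * f x := by
    intro x u
    have hiff : (x ≤ t - h * u) ↔ (u ≤ (t - x) / h) := by
      rw [le_div_iff₀ hh]; constructor <;> intro <;> nlinarith
    rw [hW]
    simp only [Set.indicator_apply, Set.mem_setOf_eq, Set.mem_Iic, hiff]
    split_ifs <;> simp
  have key : ∀ x, K ((t - x) / h) * f x = ∫ u, W (x, u) ∂ν := by
    intro x
    rw [Kform a ha k hsupp hkInt K hK]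
    have e2 : ∫ u in Set.Ioc (-a) a ∩ Set.Iic ((t - x) / h), k u
        = ∫ u, (Set.Iic ((t - x) / h)).indicator k u ∂ν := by
      rw [hν, MeasureTheory.integral_indicator measurableSet_Iic,
        Measure.restrict_restrict measurableSet_Iic, Set.inter_comm]
    rw [e2, ← MeasureTheory.integral_mul_const]
    exact integral_congr_ae (Filter.Eventually.of_forall fun u => (hWeq x u).symm)
  have inner : ∀ u, ∫ x, W (x, u) = k u * F (t - h * u) := by
    intro u
    have e3 : ∀ x, W (x, u) = (Set.Iic (t - h * u)).indicator (fun x => k u * f x) x := by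
      intro x
      rw [hW]
      simp only [Set.indicator_apply, Set.mem_setOf_eq, Set.mem_Iic]
    rw [integral_congr_ae (Filter.Eventually.of_forall e3),
      MeasureTheory.integral_indicator measurableSet_Iic, MeasureTheory.integral_const_mul,
      Fint F f hF hf hFbot hfint]
  calc ∫ x, K ((t - x) / h) * f x = ∫ x, ∫ u, W (x, u) ∂ν :=
        integral_congr_ae (Filter.Eventually.of_forall key)
    _ = ∫ u in Set.Ioc (-a) a, ∫ x, W (x, u) := by
        rw [← hν]
        have hWint' : Integrable (Function.uncurry (fun x u => W (x, u))) (volume.prod ν) := by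
          have e : Function.uncurry (fun x u => W (x, u)) = W := by
            funext p; simp [Function.uncurry]
          rw [e]; exact hWint
        exact integral_integral_swap hWint'
    _ = ∫ u in Set.Ioc (-a) a, k u * F (t - h * u) := by
        rw [← hν]
        exact integral_congr_ae (μ := ν) (Filter.Eventually.of_forall fun u => inner u)

/-- Bias expansion of the kernel distribution function estimator:
`∫ K((t-x)/h) f(x) dx = F(t) + (h²/2) f'(t) ∫ u² k(u) du + O(h³)` as `h → 0`. -/
theorem stmt_13 (a : ℝ) (ha : 0 < a) (k : ℝ → ℝ)
    (hk0 : ∀ x, 0 ≤ k x)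
    (hsupp : ∀ x, x ∉ Set.Icc (-a) a → k x = 0)
    (hsymm : ∀ x, k (-x) = k x)
    (hkInt : Integrable k volume)
    (hint1 : ∫ x in (-a)..a, k x = 1)
    (hint0 : (∫ x in (-a)..a, x * k x) = 0)
    (hint2 : (∫ x in (-a)..a, x ^ 2 * k x) ≠ 0)
    (K : ℝ → ℝ) (hK : ∀ s, K s = ∫ x in (-a)..s, k x)
    (F f : ℝ → ℝ)
    (hF : ContDiff ℝ 3 F) (hf : f = deriv F)
    (hFmono : Monotone F)
    (hFbot : Filter.Tendsto F Filter.atBot (nhds 0))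
    (hFtop : Filter.Tendsto F Filter.atTop (nhds 1))
    (hfint : Integrable f volume)
    (t : ℝ) :
    ∃ C > (0 : ℝ), ∃ δ > (0 : ℝ), ∀ h : ℝ, 0 < h → h < δ →
      |(∫ x, K ((t - x) / h) * f x)
        - (F t + h ^ 2 / 2 * deriv f t * ∫ u in (-a)..a, u ^ 2 * k u)|
      ≤ C * h ^ 3 := by
  have hSUBST := hf
  have haa : (-a : ℝ) ≤ a := by linarith
  -- bound on third derivative
  have h3 : ContDiff ℝ (2+1) F := by norm_num; exact hF
  have h2 : ContDiff ℝ (1+1) (deriv F) := by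
    have := (contDiff_succ_iff_deriv.mp h3).2.2; norm_num at this ⊢; exact this
  have h1 : ContDiff ℝ (0+1) (deriv (deriv F)) := by
    have := (contDiff_succ_iff_deriv.mp h2).2.2; norm_num at this ⊢; exact this
  have h0 := (contDiff_succ_iff_deriv.mp h1).2.2
  obtain ⟨M₀, hM₀⟩ := (isCompact_Icc (a := t - a) (b := t + a)).exists_bound_of_continuousOn
    (h0.continuous.continuousOn)
  set M := max M₀ 0 with hMdef
  have hMnn : 0 ≤ M := le_max_right _ _
  have hM : ∀ v, |v| ≤ a → |deriv (deriv (deriv F)) (t + v)| ≤ M := by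
    intro v hv
    rw [abs_le] at hv
    exact le_trans (hM₀ (t + v) ⟨by linarith, by linarith⟩) (le_max_left _ _)
  refine ⟨M * a ^ 3 + 1, by positivity, 1, one_pos, fun h hh0 hh1 => ?_⟩
  rw [fubini_step a ha k hk0 hsupp hkInt K hK F f hF hf hFbot hfint t h hh0,
    ← intervalIntegral.integral_of_le haa]
  -- Taylor remainder
  set R : ℝ → ℝ := fun u => F (t - h * u) - F t + deriv F t * (h * u)
      - deriv (deriv F) t * (h * u) ^ 2 / 2 with hRdef
  have htay := taylor3 hF t a M hMnn hM
  have hRb : ∀ u, |u| ≤ a → |R u| ≤ M * a ^ 3 * h ^ 3 := by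
    intro u hu
    have hs : |(-(h * u))| ≤ a := by
      rw [abs_neg, abs_mul, abs_of_pos hh0]
      nlinarith [abs_nonneg u]
    have hthis := htay (-(h * u)) hs
    have e : F (t + -(h * u)) - F t - deriv F t * (-(h * u))
        - deriv (deriv F) t * (-(h * u)) ^ 2 / 2 = R u := by
      have e2 : t + -(h * u) = t - h * u := by ring
      rw [hRdef, e2]; ring
    rw [e] at hthis
    calc |R u| ≤ M * |(-(h * u))| ^ 3 := hthis
      _ = M * (h ^ 3 * |u| ^ 3) := by
          rw [abs_neg, abs_mul, abs_of_pos hh0]; ring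
      _ = M * |u| ^ 3 * h ^ 3 := by ring
      _ ≤ M * a ^ 3 * h ^ 3 :=
          mul_le_mul_of_nonneg_right
            (mul_le_mul_of_nonneg_left (pow_le_pow_left₀ (abs_nonneg u) hu 3) hMnn)
            (le_of_lt (pow_pos hh0 3))
  -- integrability facts
  have hik : IntervalIntegrable k volume (-a) a := hkInt.intervalIntegrable
  have hi1 : IntervalIntegrable (fun u => u * k u) volume (-a) a :=
    hik.continuousOn_mul continuous_id.continuousOn
  have hi2 : IntervalIntegrable (fun u => u ^ 2 * k u) volume (-a) a :=
    hik.continuousOn_mul (continuous_pow 2).continuousOn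
  have hcF : Continuous fun u => F (t - h * u) :=
    hF.continuous.comp (by continuity)
  have hiF : IntervalIntegrable (fun u => k u * F (t - h * u)) volume (-a) a :=
    hik.mul_continuousOn hcF.continuousOn
  have l1 : IntervalIntegrable (fun u => k u * F t) volume (-a) a := hik.mul_const _
  have l2 : IntervalIntegrable (fun u => (h * deriv F t) * (u * k u)) volume (-a) a :=
    hi1.const_mul _
  have l3 : IntervalIntegrable
      (fun u => (h ^ 2 / 2 * deriv (deriv F) t) * (u ^ 2 * k u)) volume (-a) a :=
    hi2.const_mul _
  have hiR : IntervalIntegrable (fun u => k u * R u) volume (-a) a := by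
    have e : (fun u => k u * R u) = fun u => k u * F (t - h * u)
        - (k u * F t - (h * deriv F t) * (u * k u)
          + (h ^ 2 / 2 * deriv (deriv F) t) * (u ^ 2 * k u)) := by
      funext u; rw [hRdef]; ring
    rw [e]
    exact hiF.sub ((l1.sub l2).add l3)
  -- split the integral
  have hsplit : ∫ u in (-a)..a, k u * F (t - h * u)
      = (∫ u in (-a)..a, k u) * F t
        - (h * deriv F t) * (∫ u in (-a)..a, u * k u)
        + (h ^ 2 / 2 * deriv (deriv F) t) * (∫ u in (-a)..a, u ^ 2 * k u)
        + ∫ u in (-a)..a, k u * R u := by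
    have e : ∀ u, k u * F (t - h * u)
        = k u * F t - (h * deriv F t) * (u * k u)
          + (h ^ 2 / 2 * deriv (deriv F) t) * (u ^ 2 * k u) + k u * R u := by
      intro u; rw [hRdef]; ring
    calc ∫ u in (-a)..a, k u * F (t - h * u)
        = ∫ u in (-a)..a, (k u * F t - (h * deriv F t) * (u * k u)
            + (h ^ 2 / 2 * deriv (deriv F) t) * (u ^ 2 * k u) + k u * R u) :=
          intervalIntegral.integral_congr (fun u _ => e u)
      _ = _ := by
          rw [intervalIntegral.integral_add ((l1.sub l2).add l3) hiR,
            intervalIntegral.integral_add (l1.sub l2) l3,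
            intervalIntegral.integral_sub l1 l2,
            intervalIntegral.integral_mul_const,
            intervalIntegral.integral_const_mul,
            intervalIntegral.integral_const_mul]
  -- remainder integral bound
  have hRint : |∫ u in (-a)..a, k u * R u| ≤ M * a ^ 3 * h ^ 3 := by
    have hb : ∀ᵐ u ∂(volume.restrict (Set.uIoc (-a) a)),
        ‖k u * R u‖ ≤ k u * (M * a ^ 3 * h ^ 3) := by
      filter_upwards [ae_restrict_mem measurableSet_uIoc] with u hu
      rw [Set.uIoc_of_le haa] at hu
      have hua : |u| ≤ a := by
        rw [abs_le]; exact ⟨le_of_lt hu.1, hu.2⟩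
      rw [Real.norm_eq_abs, abs_mul, abs_of_nonneg (hk0 u)]
      exact mul_le_mul_of_nonneg_left (hRb u hua) (hk0 u)
    calc |∫ u in (-a)..a, k u * R u|
        ≤ |∫ u in (-a)..a, k u * (M * a ^ 3 * h ^ 3)| :=
          intervalIntegral.norm_integral_le_abs_of_norm_le hb (hik.mul_const _)
      _ = M * a ^ 3 * h ^ 3 := by
          rw [intervalIntegral.integral_mul_const, hint1, one_mul,
            abs_of_nonneg (by positivity)]
  -- assemble
  have hderivf : deriv f t = deriv (deriv F) t := by rw [hf]
  have efin : (∫ u in (-a)..a, k u) * F t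
        - (h * deriv F t) * (∫ u in (-a)..a, u * k u)
        + (h ^ 2 / 2 * deriv (deriv F) t) * (∫ u in (-a)..a, u ^ 2 * k u)
        + (∫ u in (-a)..a, k u * R u)
        - (F t + h ^ 2 / 2 * deriv f t * ∫ u in (-a)..a, u ^ 2 * k u)
      = ∫ u in (-a)..a, k u * R u := by
    rw [hint1, hint0, hderivf]; ring
  rw [hsplit, efin]
  calc |∫ u in (-a)..a, k u * R u| ≤ M * a ^ 3 * h ^ 3 := hRint
    _ ≤ (M * a ^ 3 + 1) * h ^ 3 := by nlinarith [pow_pos hh0 3]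
end

section
/- Let $F$ be a twice continuously differentiable CDF with density $f$, $k$ a symmetric probability density on $[-a,a]$ with CDF $K$, and $h > 0$. Then $\int_{-\infty}^{\infty} K\left(\frac{t-x}{h}\right)^2 f(x)\, dx = F(t) - h f(t)\left(\frac{a}{2} - \int_{-a}^{a} g(u)^2\, du\right) + O(h^2)$ as $h \to 0$, where $g(u) = K(u) - 1/2$. -/
set_option maxHeartbeats 1000000


open MeasureTheory

/-- Second-moment expansion: `∫ K((t-x)/h)² f(x) dx
= F(t) - h f(t) (a/2 - ∫ g(u)² du) + O(h²)` as `h → 0`, where `g = K - 1/2`. -/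
theorem stmt_14 (a : ℝ) (ha : 0 < a) (k : ℝ → ℝ)
    (hk0 : ∀ x, 0 ≤ k x)
    (hsupp : ∀ x, x ∉ Set.Icc (-a) a → k x = 0)
    (hsymm : ∀ x, k (-x) = k x)
    (hkInt : Integrable k volume)
    (hint1 : ∫ x in (-a)..a, k x = 1)
    (hint0 : (∫ x in (-a)..a, x * k x) = 0)
    (hint2 : (∫ x in (-a)..a, x ^ 2 * k x) ≠ 0)
    (K : ℝ → ℝ) (hK : ∀ s, K s = ∫ x in (-a)..s, k x)
    (F f : ℝ → ℝ)
    (hF : ContDiff ℝ 2 F) (hf : f = deriv F)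
    (hFmono : Monotone F)
    (hFbot : Filter.Tendsto F Filter.atBot (nhds 0))
    (hFtop : Filter.Tendsto F Filter.atTop (nhds 1))
    (hfint : Integrable f volume)
    (g : ℝ → ℝ) (hg : ∀ u, g u = K u - 1 / 2)
    (t : ℝ) :
    ∃ C > (0 : ℝ), ∃ δ > (0 : ℝ), ∀ h : ℝ, 0 < h → h < δ →
      |(∫ x, (K ((t - x) / h)) ^ 2 * f x)
        - (F t - h * f t * (a / 2 - ∫ u in (-a)..a, (g u) ^ 2))|
      ≤ C * h ^ 2 := by
  classical
  -- basic facts about k and K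
  have hkII : ∀ p q : ℝ, IntervalIntegrable k volume p q := fun p q =>
    hkInt.intervalIntegrable
  have hKeq : K = fun s => ∫ x in (-a)..s, k x := funext hK
  have hKcont : Continuous K := by
    rw [hKeq]; exact intervalIntegral.continuous_primitive hkII (-a)
  have hadd : ∀ p q r : ℝ, (∫ x in p..q, k x) + ∫ x in q..r, k x = ∫ x in p..r, k x :=
    fun p q r => intervalIntegral.integral_add_adjacent_intervals (hkII p q) (hkII q r)
  have hzero : ∀ p q : ℝ, p ≤ q → (∀ x ∈ Set.Ioo p q, k x = 0) →
      (∫ x in p..q, k x) = 0 := by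
    intro p q hpq h0
    rw [intervalIntegral.integral_of_le hpq, integral_Ioc_eq_integral_Ioo]
    rw [setIntegral_congr_fun measurableSet_Ioo h0]
    simp
  have K0 : ∀ s, s ≤ -a → K s = 0 := by
    intro s hs
    have h1 : (∫ x in s..(-a), k x) = 0 :=
      hzero s (-a) hs (fun x hx => hsupp x (by
        intro hx'; exact absurd hx'.1 (not_le.mpr hx.2)))
    have := hadd (-a) s (-a)
    rw [hK s]
    have h2 : (∫ x in (-a)..(-a), k x) = 0 := intervalIntegral.integral_same
    linarith [hadd (-a) s (-a), h1, h2]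
  have K1 : ∀ s, a ≤ s → K s = 1 := by
    intro s hs
    have h1 : (∫ x in a..s, k x) = 0 :=
      hzero a s hs (fun x hx => hsupp x (by
        intro hx'; exact absurd hx'.2 (not_le.mpr hx.1)))
    rw [hK s, ← hadd (-a) a s, hint1, h1, add_zero]
  have Kmono : Monotone K := by
    intro p q hpq
    rw [hK p, hK q, ← hadd (-a) p q]
    have : 0 ≤ ∫ x in p..q, k x :=
      intervalIntegral.integral_nonneg hpq (fun x _ => hk0 x)
    linarith
  have Knn : ∀ s, 0 ≤ K s := by
    intro s
    rcases le_total s (-a) with hs | hs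
    · rw [K0 s hs]
    · have := Kmono hs
      rw [K0 (-a) le_rfl] at this; linarith [Kmono hs, K0 (-a) le_rfl]
  have Kle1 : ∀ s, K s ≤ 1 := by
    intro s
    rcases le_total s a with hs | hs
    · have := Kmono hs; rw [K1 a le_rfl] at this; exact this
    · rw [K1 s hs]
  have Ksum : ∀ u : ℝ, K (-u) = 1 - K u := by
    intro u
    have h1 : (∫ x in u..a, k (-x)) = ∫ x in (-a)..(-u), k x := by
      simpa using intervalIntegral.integral_comp_neg (a := u) (b := a) (f := k)
    have h2 : (∫ x in u..a, k x) = ∫ x in (-a)..(-u), k x := by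
      rw [← h1]; congr 1; funext x; rw [hsymm]
    have h3 := hadd (-a) u a
    rw [hint1] at h3
    rw [hK (-u), hK u, ← h2]
    linarith
  -- g continuous, odd, zero integral
  have hgeq : g = fun u => K u - 1 / 2 := funext hg
  have hgcont : Continuous g := by rw [hgeq]; exact hKcont.sub continuous_const
  have hgodd : ∀ u, g (-u) = - g u := by
    intro u; rw [hg, hg, Ksum]; ring
  have hgint0 : (∫ u in (-a)..a, g u) = 0 := by
    have h1 : (∫ u in (-a)..a, g (-u)) = ∫ u in (-a)..a, g u := by
      simpa using intervalIntegral.integral_comp_neg (a := -a) (b := a) (f := g)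
    have h2 : (∫ u in (-a)..a, g (-u)) = - ∫ u in (-a)..a, g u := by
      rw [show (fun u => g (-u)) = (fun u => - g u) from funext hgodd]
      exact intervalIntegral.integral_neg
    linarith
  -- ∫ K² = a/2 + ∫ g²
  have hgII : IntervalIntegrable g volume (-a) a := hgcont.intervalIntegrable _ _
  have hg2II : IntervalIntegrable (fun u => (g u)^2) volume (-a) a :=
    (hgcont.pow 2).intervalIntegrable _ _
  have hK2 : (∫ u in (-a)..a, (K u)^2)
      = a / 2 + ∫ u in (-a)..a, (g u)^2 := by
    have e : ∀ u, (K u)^2 = (g u)^2 + (g u + 1/4) := by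
      intro u; rw [hg]; ring
    rw [intervalIntegral.integral_congr (g := fun u => (g u)^2 + (g u + 1/4))
      (fun u _ => e u)]
    rw [intervalIntegral.integral_add hg2II
      (hgII.add (intervalIntegrable_const))]
    rw [intervalIntegral.integral_add hgII intervalIntegrable_const]
    rw [hgint0, intervalIntegral.integral_const]
    simp; ring
  -- facts about f
  have h2' : ContDiff ℝ ((1 : ℕ) + 1) F := by exact_mod_cast hF
  have hd1 : ContDiff ℝ 1 (deriv F) := (contDiff_succ_iff_deriv.mp h2').2.2
  have hfc : Continuous f := by rw [hf]; exact hF.continuous_deriv (by norm_num)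
  have hfdiff : Differentiable ℝ f := by rw [hf]; exact hd1.differentiable one_ne_zero
  have hf'cont : Continuous (deriv f) := by rw [hf]; exact hd1.continuous_deriv le_rfl
  have hFderiv : ∀ x : ℝ, HasDerivAt F (f x) x := by
    intro x
    rw [hf]
    exact ((hF.differentiable (by norm_num)) x).hasDerivAt
  have hFTC : ∀ p q : ℝ, (∫ x in p..q, f x) = F q - F p := fun p q =>
    intervalIntegral.integral_eq_sub_of_hasDerivAt (fun x _ => hFderiv x)
      (hfc.intervalIntegrable p q)
  have hIic : ∀ c : ℝ, (∫ x in Set.Iic c, f x) = F c := by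
    intro c
    have := integral_Iic_of_hasDerivAt_of_tendsto' (a := c) (f := F) (f' := f)
      (fun x _ => hFderiv x) hfint.integrableOn hFbot
    simpa using this
  -- bound on deriv f on the compact interval
  set I : Set ℝ := Set.Icc (t - a) (t + a) with hI
  obtain ⟨B, hB⟩ := (isCompact_Icc (a := t - a) (b := t + a)).exists_bound_of_continuousOn
    hf'cont.continuousOn
  have htI : t ∈ I := by constructor <;> simp <;> linarith
  have hBnn : 0 ≤ B := le_trans (norm_nonneg _) (hB t htI)
  have hlip : ∀ x ∈ I, ∀ y ∈ I, |f y - f x| ≤ B * |y - x| := by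
    intro x hx y hy
    have := (convex_Icc (t - a) (t + a)).norm_image_sub_le_of_norm_deriv_le
      (fun z _ => hfdiff z) (fun z hz => hB z hz) hx hy
    simpa [Real.norm_eq_abs] using this
  refine ⟨3 * a ^ 2 * B + 1, by positivity, 1, one_pos, ?_⟩
  intro h h0 h1
  have hne : h ≠ 0 := ne_of_gt h0
  set c₁ := t - a * h with hc₁
  set c₂ := t + a * h with hc₂
  have hah : 0 < a * h := mul_pos ha h0
  have haha : a * h ≤ a := by nlinarith
  have hc12 : c₁ ≤ c₂ := by simp [hc₁, hc₂]; linarith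
  set W : ℝ → ℝ := fun x => (K ((t - x) / h)) ^ 2 * f x with hW
  have hWcont : Continuous W := by
    apply Continuous.mul _ hfc
    exact (hKcont.comp ((continuous_const.sub continuous_id).div_const h)).pow 2
  have hWint : Integrable W := by
    apply hfint.abs.mono' hWcont.aestronglyMeasurable
    filter_upwards with x
    have h01 : 0 ≤ K ((t - x)/h) := Knn _
    have h02 : K ((t - x)/h) ≤ 1 := Kle1 _
    have : (K ((t - x)/h))^2 ≤ 1 := by nlinarith
    rw [Real.norm_eq_abs, hW, abs_mul, abs_of_nonneg (by positivity : (0:ℝ) ≤ (K ((t - x)/h))^2)]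
    calc (K ((t - x)/h))^2 * |f x| ≤ 1 * |f x| := by
          apply mul_le_mul_of_nonneg_right this (abs_nonneg _)
      _ = |f x| := one_mul _
  -- step A: integral over ℝ equals integral over Iic c₂
  have hWzero : ∀ x ∈ Set.Ioi c₂, W x = 0 := by
    intro x hx
    have hx' : c₂ < x := hx
    have : (t - x) / h ≤ -a := by
      rw [div_le_iff₀ h0]
      simp only [hc₂] at hx'
      nlinarith
    rw [hW]; simp only
    rw [K0 _ this]; ring
  have stepA : (∫ x, W x) = ∫ x in Set.Iic c₂, W x := by
    rw [← intervalIntegral.integral_Iic_add_Ioi (b := c₂) hWint.integrableOn hWint.integrableOn]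
    have : (∫ x in Set.Ioi c₂, W x) = 0 := by
      rw [setIntegral_congr_fun measurableSet_Ioi hWzero]; simp
    rw [this, add_zero]
  -- step B: split at c₁
  have stepB : (∫ x in Set.Iic c₂, W x)
      = (∫ x in Set.Iic c₁, W x) + ∫ x in c₁..c₂, W x := by
    have := intervalIntegral.integral_Iic_sub_Iic (f := W) (μ := volume)
      hWint.integrableOn hWint.integrableOn (a := c₁) (b := c₂)
    linarith
  -- step C: on Iic c₁, W = f
  have stepC : (∫ x in Set.Iic c₁, W x) = F c₁ := by
    have heq : ∀ x ∈ Set.Iic c₁, W x = f x := by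
      intro x hx
      have hx' : x ≤ c₁ := hx
      have : a ≤ (t - x) / h := by
        rw [le_div_iff₀ h0]
        simp only [hc₁] at hx'
        nlinarith
      rw [hW]; simp only
      rw [K1 _ this]; ring
    rw [setIntegral_congr_fun measurableSet_Iic heq, hIic]
  -- step D: substitution
  set Φ : ℝ → ℝ := fun u => (K u)^2 * f (t - h * u) with hΦ
  have stepD : (∫ x in c₁..c₂, W x) = h * ∫ u in (-a)..a, Φ u := by
    have e1 : ∀ x, W x = (fun y => (K (y / h))^2 * f (t - y)) (t - x) := by
      intro x; rw [hW]; simp only [sub_sub_cancel]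
    calc (∫ x in c₁..c₂, W x)
        = ∫ x in c₁..c₂, (fun y => (K (y / h))^2 * f (t - y)) (t - x) :=
          intervalIntegral.integral_congr (fun x _ => e1 x)
      _ = ∫ y in (t - c₂)..(t - c₁), (K (y / h))^2 * f (t - y) :=
          intervalIntegral.integral_comp_sub_left (fun y => (K (y / h))^2 * f (t - y)) t
      _ = ∫ y in (-(a*h))..(a*h), (K (y / h))^2 * f (t - h * (y / h)) := by
          rw [show t - c₂ = -(a*h) by rw [hc₂]; ring, show t - c₁ = a*h by rw [hc₁]; ring]
          apply intervalIntegral.integral_congr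
          intro y _
          show (K (y/h))^2 * f (t - y) = (K (y/h))^2 * f (t - h * (y/h))
          rw [mul_div_cancel₀ y hne]
      _ = h • ∫ u in ((-(a*h))/h)..((a*h)/h), (K u)^2 * f (t - h * u) :=
          intervalIntegral.integral_comp_div (f := fun u => (K u)^2 * f (t - h * u)) hne
      _ = h * ∫ u in (-a)..a, Φ u := by
          rw [neg_div, mul_div_assoc, div_self hne, mul_one, smul_eq_mul, hΦ]
  -- split Φ integral
  have hΦcont : Continuous Φ := by
    apply Continuous.mul ((hKcont.pow 2)) (hfc.comp (continuous_const.sub (continuous_const.mul continuous_id)))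
  have hq1 : IntervalIntegrable (fun u => (K u)^2 * (f (t - h*u) - f t)) volume (-a) a := by
    apply Continuous.intervalIntegrable
    exact (hKcont.pow 2).mul ((hfc.comp (continuous_const.sub (continuous_const.mul continuous_id))).sub continuous_const)
  have hq2 : IntervalIntegrable (fun u => f t * (K u)^2) volume (-a) a := by
    apply Continuous.intervalIntegrable
    exact continuous_const.mul (hKcont.pow 2)
  set G : ℝ := ∫ u in (-a)..a, (g u)^2 with hG
  set E : ℝ := ∫ u in (-a)..a, (K u)^2 * (f (t - h*u) - f t) with hE
  have stepE : (∫ u in (-a)..a, Φ u) = E + f t * (a / 2 + G) := by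
    have e : ∀ u, Φ u = (K u)^2 * (f (t - h*u) - f t) + f t * (K u)^2 := by
      intro u; rw [hΦ]; ring
    rw [intervalIntegral.integral_congr (g := fun u =>
      (K u)^2 * (f (t - h*u) - f t) + f t * (K u)^2) (fun u _ => e u)]
    rw [intervalIntegral.integral_add hq1 hq2, intervalIntegral.integral_const_mul, hK2]
  -- main identity
  have main : (∫ x, W x) = F c₁ + h * (E + f t * (a / 2 + G)) := by
    rw [stepA, stepB, stepC, stepD, stepE]
  -- bound 1: Taylor for F
  have hc₁I : c₁ ∈ I := by
    constructor <;> simp [hc₁] <;> nlinarith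
  have bound1 : |F c₁ - F t + a * h * f t| ≤ B * a ^ 2 * h ^ 2 := by
    have hFt : F t - F c₁ = ∫ x in c₁..t, f x := by rw [hFTC]
    have hconst : (∫ x in c₁..t, f t) = a * h * f t := by
      rw [intervalIntegral.integral_const, smul_eq_mul, hc₁]; ring
    have hdiff : F c₁ - F t + a * h * f t = -(∫ x in c₁..t, (f x - f t)) := by
      rw [intervalIntegral.integral_sub (hfc.intervalIntegrable _ _)
        (intervalIntegrable_const), hconst, ← hFt]
      ring
    rw [hdiff, abs_neg]
    have hb : ∀ x ∈ Set.uIoc c₁ t, ‖f x - f t‖ ≤ B * (a * h) := by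
      intro x hx
      have hx' : x ∈ Set.Icc c₁ t := by
        rcases hx with ⟨hx1, hx2⟩
        constructor
        · calc c₁ = min c₁ t := by rw [min_eq_left]; simp [hc₁]; nlinarith
            _ ≤ x := le_of_lt hx1
        · calc x ≤ max c₁ t := hx2
            _ = t := by rw [max_eq_right]; simp [hc₁]; nlinarith
      have hxI : x ∈ I := by
        constructor
        · calc t - a ≤ c₁ := by simp [hc₁]; nlinarith
            _ ≤ x := hx'.1
        · calc x ≤ t := hx'.2
            _ ≤ t + a := by linarith
      calc ‖f x - f t‖ ≤ B * |x - t| := by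
            simpa [Real.norm_eq_abs] using hlip t htI x hxI
        _ ≤ B * (a * h) := by
            apply mul_le_mul_of_nonneg_left _ hBnn
            rw [abs_le]
            constructor <;> [skip; skip] <;> (simp [hc₁] at hx' ⊢) <;> nlinarith [hx'.1, hx'.2]
    have := intervalIntegral.norm_integral_le_of_norm_le_const hb
    rw [Real.norm_eq_abs] at this
    calc |∫ x in c₁..t, (f x - f t)| ≤ B * (a*h) * |t - c₁| := this
      _ = B * a ^ 2 * h ^ 2 := by
          rw [show t - c₁ = a * h by rw [hc₁]; ring, abs_of_pos hah]; ring
  -- bound 2: E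
  have bound2 : |E| ≤ 2 * a ^ 2 * B * h := by
    have hb : ∀ u ∈ Set.uIoc (-a) a, ‖(K u)^2 * (f (t - h*u) - f t)‖ ≤ B * (a * h) := by
      intro u hu
      have hu' : u ∈ Set.Icc (-a) a := by
        rcases hu with ⟨hu1, hu2⟩
        constructor
        · calc -a = min (-a) a := by rw [min_eq_left]; linarith
            _ ≤ u := le_of_lt hu1
        · calc u ≤ max (-a) a := hu2
            _ = a := by rw [max_eq_right]; linarith
      have hxI : t - h * u ∈ I := by
        constructor
        · simp; nlinarith [hu'.1, hu'.2]
        · simp; nlinarith [hu'.1, hu'.2]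
      have h01 : 0 ≤ K u := Knn u
      have h02 : K u ≤ 1 := Kle1 u
      have hK2le : (K u)^2 ≤ 1 := by nlinarith
      rw [Real.norm_eq_abs, abs_mul, abs_of_nonneg (by positivity : (0:ℝ) ≤ (K u)^2)]
      calc (K u)^2 * |f (t - h*u) - f t| ≤ 1 * |f (t - h*u) - f t| :=
            mul_le_mul_of_nonneg_right hK2le (abs_nonneg _)
        _ = |f (t - h*u) - f t| := one_mul _
        _ ≤ B * |t - h*u - t| := by simpa [Real.norm_eq_abs] using hlip t htI _ hxI
        _ ≤ B * (a * h) := by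
            apply mul_le_mul_of_nonneg_left _ hBnn
            rw [show t - h*u - t = -(h*u) by ring, abs_neg, abs_mul,
              abs_of_pos h0]
            calc h * |u| ≤ h * a := by
                  apply mul_le_mul_of_nonneg_left _ (le_of_lt h0)
                  rw [abs_le]; exact ⟨hu'.1, hu'.2⟩
              _ = a * h := by ring
    have := intervalIntegral.norm_integral_le_of_norm_le_const hb
    rw [Real.norm_eq_abs] at this
    calc |E| ≤ B * (a*h) * |a - (-a)| := this
      _ = 2 * a ^ 2 * B * h := by
          rw [show a - (-a) = 2*a by ring, abs_of_pos (by linarith)]; ring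
  -- conclude
  have key : (∫ x, W x) - (F t - h * f t * (a / 2 - G))
      = (F c₁ - F t + a * h * f t) + h * E := by
    rw [main]; ring
  have : |(∫ x, W x) - (F t - h * f t * (a / 2 - G))|
      ≤ B * a ^ 2 * h ^ 2 + h * (2 * a ^ 2 * B * h) := by
    rw [key]
    calc |(F c₁ - F t + a * h * f t) + h * E|
        ≤ |F c₁ - F t + a * h * f t| + |h * E| := abs_add_le _ _
      _ ≤ B * a ^ 2 * h ^ 2 + h * (2 * a ^ 2 * B * h) := by
          apply add_le_add bound1
          rw [abs_mul, abs_of_pos h0]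
          exact mul_le_mul_of_nonneg_left bound2 (le_of_lt h0)
  calc |(∫ x, (K ((t - x) / h)) ^ 2 * f x) - (F t - h * f t * (a / 2 - ∫ u in (-a)..a, (g u) ^ 2))|
      = |(∫ x, W x) - (F t - h * f t * (a / 2 - G))| := by rw [hW, hG]
    _ ≤ B * a ^ 2 * h ^ 2 + h * (2 * a ^ 2 * B * h) := this
    _ ≤ (3 * a ^ 2 * B + 1) * h ^ 2 := by nlinarith
end

section
/- Let $F$ be a twice continuously differentiable CDF with density $f$, $k$ a symmetric probability density on $[-a,a]$ with CDF $K$, and $h > 0$. Then $\mathrm{Var}\left(K\left(\frac{t-X}{h}\right)\right) = F(t)[1-F(t)] - h f(t)\left(a - \int_{-a}^{a} K(u)^2\, du\right) + O(h^2)$ as $h \to 0$, where $X$ has CDF $F$. -/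
set_option maxHeartbeats 1000000
open MeasureTheory Set Filter

lemma aux_int (a t h : ℝ) (ha : 0 < a) (hh : 0 < h) (F f : ℝ → ℝ)
    (hfc : Continuous f) (hf0 : ∀ x, 0 ≤ f x) (hfint : Integrable f)
    (hFd : ∀ x, HasDerivAt F (f x) x) (hFbot : Tendsto F atBot (nhds 0))
    (G : ℝ → ℝ) (hGc : Continuous G) (hG0 : ∀ u, 0 ≤ G u) (hG1 : ∀ u, G u ≤ 1)
    (hGlow : ∀ u, u ≤ -a → G u = 0) (hGhigh : ∀ u, a ≤ u → G u = 1) :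
    ∫ x, G ((t - x)/h) ∂(volume.withDensity (fun x => ENNReal.ofReal (f x)))
      = F (t - h*a) + h * ∫ u in Ioc (-a) a, G u * f (t - h*u) := by
  have hne : h ≠ 0 := ne_of_gt hh
  set ψ : ℝ → ℝ := fun u => G u * f (t - h*u) with hψdef
  have hfh : Integrable (fun u => f (t - h*u)) :=
    (integrable_comp_mul_left_iff (g := fun v => f (t - v)) hne).2 (hfint.comp_sub_left t)
  have hψc : Continuous ψ := hGc.mul (hfc.comp (continuous_const.sub (continuous_const.mul continuous_id)))
  have hψint : Integrable ψ := by
    refine hfh.mono hψc.aestronglyMeasurable (ae_of_all _ fun u => ?_)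
    have h1 : 0 ≤ f (t - h*u) := hf0 _
    simp only [ψ, Real.norm_eq_abs, abs_mul, abs_of_nonneg (hG0 u), abs_of_nonneg h1]
    nlinarith [hG1 u, hG0 u]
  -- step 1 : withDensity
  have step1 : ∫ x, G ((t - x)/h) ∂(volume.withDensity (fun x => ENNReal.ofReal (f x)))
      = ∫ x, f x * G ((t - x)/h) := by
    have hm : Measurable fun x => (f x).toNNReal := hfc.measurable.real_toNNReal
    have := integral_withDensity_eq_integral_smul (μ := volume) hm (fun x => G ((t - x)/h))
    simp only [ENNReal.ofReal] at *
    rw [this]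
    refine integral_congr_ae (ae_of_all _ fun x => ?_)
    simp [NNReal.smul_def, Real.coe_toNNReal _ (hf0 x)]
  -- step 2 : substitution
  have step2 : ∫ x, f x * G ((t - x)/h) = h * ∫ u, ψ u := by
    have e1 : ∀ x : ℝ, f x * G ((t - x)/h) = ψ ((t - x)/h) := by
      intro x
      have : t - h * ((t - x)/h) = x := by field_simp; ring
      simp [ψ, this, mul_comm]
    simp_rw [e1]
    rw [integral_sub_left_eq_self (fun y => ψ (y/h)) volume t,
      Measure.integral_comp_div ψ h, abs_of_pos hh, smul_eq_mul]
  -- step 3 : split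
  have step3 : ∫ u, ψ u = (∫ u in Ioc (-a) a, ψ u) + F (t - h*a) / h := by
    have hsplit : (∫ u in Iic (-a), ψ u) + ∫ u in Ioi (-a), ψ u = ∫ u, ψ u := by
      simpa using integral_add_compl (measurableSet_Iic (a := -a)) hψint
    have hzero : ∫ u in Iic (-a), ψ u = 0 := by
      refine setIntegral_eq_zero_of_forall_eq_zero fun u hu => ?_
      simp [ψ, hGlow u hu]
    have hsplit2 : ∫ u in Ioi (-a), ψ u = (∫ u in Ioc (-a) a, ψ u) + ∫ u in Ioi a, ψ u := by
      rw [← setIntegral_union (Set.Ioc_disjoint_Ioi le_rfl) measurableSet_Ioi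
        hψint.integrableOn hψint.integrableOn,
        Set.Ioc_union_Ioi_eq_Ioi (by linarith : -a ≤ a)]
    have htail : ∫ u in Ioi a, ψ u = F (t - h*a) / h := by
      have hcong : ∫ u in Ioi a, ψ u = ∫ u in Ioi a, f (t - h*u) := by
        refine setIntegral_congr_fun measurableSet_Ioi fun u hu => ?_
        simp [ψ, hGhigh u (le_of_lt hu)]
      rw [hcong]
      have hΦd : ∀ u ∈ Ici a, HasDerivAt (fun u => -(F (t - h*u)) / h) (f (t - h*u)) u := by
        intro u _
        have hinner : HasDerivAt (fun u : ℝ => t - h*u) (-h) u := by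
          simpa using ((hasDerivAt_id u).const_mul h).const_sub t
        have := ((hFd (t - h*u)).comp u hinner).neg.div_const h
        exact this.congr_deriv (by rw [mul_neg, neg_neg, mul_div_cancel_right₀ _ hne])
      have hT : Tendsto (fun u => -(F (t - h*u)) / h) atTop (nhds 0) := by
        have h1 : Tendsto (fun u : ℝ => t - h*u) atTop atBot := by
          apply tendsto_atBot_add_const_left
          exact (tendsto_neg_atBot_iff).2 (tendsto_id.const_mul_atTop hh)
        have := ((hFbot.comp h1).neg).div_const h
        simpa using this
      have := integral_Ioi_of_hasDerivAt_of_tendsto' hΦd hfh.integrableOn hT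
      rw [this]
      ring
    rw [← hsplit, hzero, hsplit2, htail]
    ring
  rw [step1, step2, step3]
  field_simp
  ring

/-- Variance expansion: for `X` with density `f` and CDF `F`,
`Var (K((t-X)/h)) = F(t)(1-F(t)) - h f(t) (a - ∫ K(u)² du) + O(h²)` as `h → 0`. -/
theorem stmt_15 (a : ℝ) (ha : 0 < a) (k : ℝ → ℝ)
    (hk0 : ∀ x, 0 ≤ k x)
    (hsupp : ∀ x, x ∉ Set.Icc (-a) a → k x = 0)
    (hsymm : ∀ x, k (-x) = k x)
    (hkInt : Integrable k volume)
    (hint1 : ∫ x in (-a)..a, k x = 1)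
    (hint0 : (∫ x in (-a)..a, x * k x) = 0)
    (hint2 : (∫ x in (-a)..a, x ^ 2 * k x) ≠ 0)
    (K : ℝ → ℝ) (hK : ∀ s, K s = ∫ x in (-a)..s, k x)
    (F f : ℝ → ℝ)
    (hF : ContDiff ℝ 2 F) (hf : f = deriv F)
    (hFmono : Monotone F)
    (hFbot : Filter.Tendsto F Filter.atBot (nhds 0))
    (hFtop : Filter.Tendsto F Filter.atTop (nhds 1))
    (hfint : Integrable f volume)
    (μ : Measure ℝ)
    (hμ : μ = volume.withDensity (fun x => ENNReal.ofReal (f x)))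
    (t : ℝ) :
    ∃ C > (0 : ℝ), ∃ δ > (0 : ℝ), ∀ h : ℝ, 0 < h → h < δ →
      |((∫ x, (K ((t - x) / h)) ^ 2 ∂μ) - (∫ x, K ((t - x) / h) ∂μ) ^ 2)
        - (F t * (1 - F t) - h * f t * (a - ∫ u in (-a)..a, (K u) ^ 2))|
      ≤ C * h ^ 2 := by
  have haa : -a ≤ a := by linarith
  -- basic facts about f and F
  have hF2 : ContDiff ℝ (1+1) F := by norm_num; exact hF
  have hf1 : ContDiff ℝ 1 f := by rw [hf]; exact (contDiff_succ_iff_deriv.mp hF2).2.2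
  have hfc : Continuous f := hf1.continuous
  have hFd : ∀ x, HasDerivAt F (f x) x := by
    intro x
    rw [hf]
    exact ((hF.differentiable (by norm_num)) x).hasDerivAt
  have hf0 : ∀ x, 0 ≤ f x := by
    intro x
    have hs : Tendsto (fun y => (y - x)⁻¹ * (F y - F x)) (nhdsWithin x (Set.Ioi x)) (nhds (f x)) := by
      have := (hasDerivAt_iff_tendsto_slope.mp (hFd x)).mono_left
        (nhdsWithin_mono x (by intro y hy; exact ne_of_gt hy : Set.Ioi x ⊆ {x}ᶜ))
      simpa [slope_fun_def_field, div_eq_inv_mul] using this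
    refine ge_of_tendsto hs ?_
    filter_upwards [self_mem_nhdsWithin] with y hy
    have : x < y := hy
    have h1 : F x ≤ F y := hFmono this.le
    have h2 : (0:ℝ) < (y - x)⁻¹ := inv_pos.mpr (by linarith)
    nlinarith
  have hf'c : Continuous (deriv f) := hf1.continuous_deriv le_rfl
  -- basic facts about K
  have hKint : ∀ u v : ℝ, IntervalIntegrable k volume u v := fun u v => hkInt.intervalIntegrable
  have hKcont : Continuous K := by
    have : K = fun s => ∫ x in (-a)..s, k x := funext hK
    rw [this]
    exact intervalIntegral.continuous_primitive hKint (-a)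
  have hzeroint : ∀ u v : ℝ, u ≤ v → (∀ x ∈ Set.Ioo u v, k x = 0) → ∫ x in u..v, k x = 0 := by
    intro u v huv hz
    rw [intervalIntegral.integral_of_le huv, integral_Ioc_eq_integral_Ioo]
    exact setIntegral_eq_zero_of_forall_eq_zero hz
  have hKadd : ∀ u v : ℝ, K v = K u + ∫ x in u..v, k x := by
    intro u v
    rw [hK, hK]
    exact (intervalIntegral.integral_add_adjacent_intervals (hKint _ _) (hKint _ _)).symm
  have hKlow : ∀ u : ℝ, u ≤ -a → K u = 0 := by
    intro u hu
    rw [hK, intervalIntegral.integral_symm]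
    rw [hzeroint u (-a) hu (fun x hx => hsupp x (fun hc => absurd hc.1 (not_le.mpr hx.2)))]
    simp
  have hKhigh : ∀ u : ℝ, a ≤ u → K u = 1 := by
    intro u hu
    rw [hKadd a u, hzeroint a u hu (fun x hx => hsupp x (fun hc => absurd hc.2 (not_le.mpr hx.1)))]
    rw [hK, hint1, add_zero]
  have hKmono : Monotone K := by
    intro u v huv
    rw [hKadd u v, le_add_iff_nonneg_right]
    exact intervalIntegral.integral_nonneg huv (fun x _ => hk0 x)
  have hK0 : ∀ u, 0 ≤ K u := by
    intro u
    rcases le_total u (-a) with hu | hu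
    · rw [hKlow u hu]
    · rw [← hKlow (-a) le_rfl]; exact hKmono hu
  have hK1 : ∀ u, K u ≤ 1 := by
    intro u
    rcases le_total a u with hu | hu
    · rw [hKhigh u hu]
    · rw [← hKhigh a le_rfl]; exact hKmono hu
  -- the reflection identity and ∫ K = a
  have hKrefl : ∀ u : ℝ, K (-u) = 1 - K u := by
    intro u
    have e1 : ∫ x in u..a, k (-x) = ∫ x in (-a)..(-u), k x := by
      simpa using intervalIntegral.integral_comp_neg (a := u) (b := a) k
    have e2 : ∫ x in u..a, k (-x) = ∫ x in u..a, k x := by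
      simp only [hsymm]
    have e3 : (∫ x in (-a)..u, k x) + ∫ x in u..a, k x = 1 := by
      rw [intervalIntegral.integral_add_adjacent_intervals (hKint _ _) (hKint _ _), hint1]
    rw [← hK (-u)] at e1
    rw [← hK u] at e3
    linarith [e1, e2, e3]
  have hKa : ∫ u in (-a)..a, K u = a := by
    have h1 : ∫ u in (-a)..a, K (-u) = ∫ u in (-a)..a, K u := by
      simpa using intervalIntegral.integral_comp_neg (a := -a) (b := a) K
    have h2 : ∫ u in (-a)..a, K (-u) = ∫ u in (-a)..a, (1 - K u) := by
      refine intervalIntegral.integral_congr fun u _ => hKrefl u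
    have hKii : IntervalIntegrable K volume (-a) a := hKcont.intervalIntegrable _ _
    have h3 : ∫ u in (-a)..a, (1 - K u) = (2*a) - ∫ u in (-a)..a, K u := by
      rw [intervalIntegral.integral_sub (intervalIntegrable_const) hKii]
      simp
      ring
    linarith [h1.symm.trans (h2.trans h3)]
  -- Taylor / Lipschitz estimates near t
  obtain ⟨M, hM⟩ := (isCompact_Icc (a := t - a) (b := t + a)).exists_bound_of_continuousOn
    hf'c.continuousOn
  have htJ : t ∈ Set.Icc (t - a) (t + a) := ⟨by linarith, by linarith⟩
  have hM0 : 0 ≤ M := le_trans (norm_nonneg _) (hM t htJ)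
  have hfdiff : ∀ x : ℝ, DifferentiableAt ℝ f x := fun x => (hf1.differentiable (by norm_num)) x
  have fLip : ∀ s ∈ Set.Icc (t - a) (t + a), |f s - f t| ≤ M * |s - t| := by
    intro s hs
    have := Convex.norm_image_sub_le_of_norm_deriv_le (f := f)
      (fun x _ => hfdiff x) hM (convex_Icc (t - a) (t + a)) htJ hs
    simpa [Real.norm_eq_abs] using this
  have hG0d : ∀ c ξ : ℝ, HasDerivAt (fun y => F y - c * y) (f ξ - c) ξ := by
    intro c ξ
    exact ((hFd ξ).sub ((hasDerivAt_id ξ).const_mul c)).congr_deriv (by ring)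
  have fTay : ∀ s ∈ Set.Icc (t - a) (t + a), |F s - F t - f t * (s - t)| ≤ M * (s - t)^2 := by
    intro s hs
    have hsub : Set.uIcc t s ⊆ Set.Icc (t - a) (t + a) := Set.uIcc_subset_Icc htJ hs
    have hbd : ∀ ξ ∈ Set.uIcc t s, ‖deriv (fun y => F y - f t * y) ξ‖ ≤ M * |s - t| := by
      intro ξ hξ
      rw [(hG0d (f t) ξ).deriv, Real.norm_eq_abs]
      have h1 : |f ξ - f t| ≤ M * |ξ - t| := fLip ξ (hsub hξ)
      have h2 : |ξ - t| ≤ |s - t| := by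
        rcases Set.mem_uIcc.mp hξ with ⟨u1, u2⟩ | ⟨u1, u2⟩ <;>
          rcases abs_cases (s - t) with ⟨e, _⟩ | ⟨e, _⟩ <;>
          rcases abs_cases (ξ - t) with ⟨e2, _⟩ | ⟨e2, _⟩ <;> linarith
      exact h1.trans (mul_le_mul_of_nonneg_left h2 hM0)
    have key := Convex.norm_image_sub_le_of_norm_deriv_le (f := fun y => F y - f t * y)
      (fun ξ _ => (hG0d (f t) ξ).differentiableAt) hbd (convex_uIcc t s)
      Set.left_mem_uIcc Set.right_mem_uIcc
    rw [Real.norm_eq_abs, Real.norm_eq_abs] at key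
    have e1 : |F s - F t - f t * (s - t)| = |(F s - f t * s) - (F t - f t * t)| := by
      congr 1; ring
    have e2 : M * |s - t| * |s - t| = M * (s - t)^2 := by
      rw [mul_assoc, abs_mul_abs_self]; ring
    rw [e1]
    rw [e2] at key
    exact key
  -- F t bounds
  have hFt0 : 0 ≤ F t := le_of_tendsto hFbot (Filter.eventually_atBot.mpr ⟨t, fun y hy => hFmono hy⟩)
  have hFt1 : F t ≤ 1 := ge_of_tendsto hFtop (Filter.eventually_atTop.mpr ⟨t, fun y hy => hFmono hy⟩)
  -- set the constants
  refine ⟨3*M*a^2 + 3*M*a^2*(3*M*a^2 + 2) + 1, by positivity, 1, one_pos, fun h hh hδ => ?_⟩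
  have hmemJ : ∀ u ∈ Set.Ioc (-a) a, (t - h*u) ∈ Set.Icc (t - a) (t + a) := by
    intro u hu
    have h1 : |h*u| ≤ a := by
      rw [abs_mul, abs_of_pos hh]
      have : |u| ≤ a := abs_le.mpr ⟨hu.1.le, hu.2⟩
      nlinarith [abs_nonneg u]
    rcases abs_le.mp h1 with ⟨l1, l2⟩
    exact ⟨by linarith, by linarith⟩
  -- the two expansions
  have hKsq0 : ∀ u : ℝ, 0 ≤ (K u)^2 := fun u => sq_nonneg _
  have hKsq1 : ∀ u : ℝ, (K u)^2 ≤ 1 := fun u => by nlinarith [hK0 u, hK1 u]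
  have hE1 := aux_int a t h ha hh F f hfc hf0 hfint hFd hFbot K hKcont hK0 hK1 hKlow hKhigh
  have hE2 := aux_int a t h ha hh F f hfc hf0 hfint hFd hFbot (fun u => (K u)^2)
    (hKcont.pow 2) hKsq0 hKsq1 (fun u hu => by show (K u)^2 = 0; rw [hKlow u hu]; ring)
    (fun u hu => by show (K u)^2 = 1; rw [hKhigh u hu]; ring)
  rw [← hμ] at hE1 hE2
  set A := ∫ u in Set.Ioc (-a) a, K u * f (t - h*u) with hA
  set B := ∫ u in Set.Ioc (-a) a, (K u)^2 * f (t - h*u) with hB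
  set Q := ∫ u in (-a)..a, (K u)^2 with hQ
  have hQset : Q = ∫ u in Set.Ioc (-a) a, (K u)^2 := intervalIntegral.integral_of_le haa
  have hKaset : (∫ u in Set.Ioc (-a) a, K u) = a := by
    rw [← intervalIntegral.integral_of_le haa]; exact hKa
  -- Taylor of F at t - h*a
  have hs0J : (t - h*a) ∈ Set.Icc (t - a) (t + a) := by
    constructor <;> nlinarith
  have hT1 : |F (t - h*a) - F t + h * a * f t| ≤ M * a^2 * h^2 := by
    have := fTay (t - h*a) hs0J
    have e : F (t - h*a) - F t - f t * ((t - h*a) - t) = F (t - h*a) - F t + h * a * f t := by ring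
    rw [e] at this
    calc |F (t - h*a) - F t + h * a * f t| ≤ M * ((t - h*a) - t)^2 := this
      _ = M * a^2 * h^2 := by ring
  have hfin : volume (Set.Ioc (-a) a) < ⊤ := by
    rw [Real.volume_Ioc]; exact ENNReal.ofReal_lt_top
  have htoReal : (volume (Set.Ioc (-a) a)).toReal = 2*a := by
    rw [Real.volume_Ioc, ENNReal.toReal_ofReal (by linarith)]; ring
  have hfhc : Continuous (fun u => f (t - h*u)) := hfc.comp (continuous_const.sub (continuous_const.mul continuous_id))
  -- bound for A
  have hAest : ∀ G : ℝ → ℝ, Continuous G → (∀ u, 0 ≤ G u) → (∀ u, G u ≤ 1) →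
      |(∫ u in Set.Ioc (-a) a, G u * f (t - h*u)) - f t * ∫ u in Set.Ioc (-a) a, G u|
        ≤ M * (h*a) * (2*a) := by
    intro G hGc hG0 hG1
    have hi1 : IntegrableOn (fun u => G u * f (t - h*u)) (Set.Ioc (-a) a) :=
      (hGc.mul hfhc).integrableOn_Ioc
    have hi2 : IntegrableOn (fun u => f t * G u) (Set.Ioc (-a) a) :=
      (continuous_const.mul hGc).integrableOn_Ioc
    have e1 : f t * (∫ u in Set.Ioc (-a) a, G u) = ∫ u in Set.Ioc (-a) a, f t * G u :=
      (integral_const_mul _ _).symm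
    rw [e1, ← integral_sub hi1 hi2]
    have hmeas : AEStronglyMeasurable (fun u => G u * f (t - h*u) - f t * G u)
        (volume.restrict (Set.Ioc (-a) a)) :=
      ((hGc.mul hfhc).sub (continuous_const.mul hGc)).aestronglyMeasurable.restrict
    rw [← Real.norm_eq_abs]
    refine le_trans (norm_setIntegral_le_of_norm_le_const hfin (C := M * (h*a)) ?_) ?_
    · intro u hu
      have hmem := hmemJ u hu
      have h1 : |f (t - h*u) - f t| ≤ M * |(t - h*u) - t| := fLip _ hmem
      have h2 : |(t - h*u) - t| = h * |u| := by
        rw [show (t - h*u) - t = -(h*u) by ring, abs_neg, abs_mul, abs_of_pos hh]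
      have h3 : |u| ≤ a := abs_le.mpr ⟨hu.1.le, hu.2⟩
      have h4 : |G u * f (t - h*u) - f t * G u| = G u * |f (t - h*u) - f t| := by
        rw [show G u * f (t - h*u) - f t * G u = G u * (f (t - h*u) - f t) by ring,
          abs_mul, abs_of_nonneg (hG0 u)]
      rw [Real.norm_eq_abs, h4]
      have h5 : G u * |f (t - h*u) - f t| ≤ 1 * |f (t - h*u) - f t| :=
        mul_le_mul_of_nonneg_right (hG1 u) (abs_nonneg _)
      rw [one_mul] at h5
      refine h5.trans (h1.trans ?_)
      rw [h2]
      nlinarith [mul_nonneg (mul_nonneg hM0 hh.le) (sub_nonneg.mpr h3)]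
    · rw [measureReal_def, htoReal]
  have hAa : |A - f t * a| ≤ M * (h*a) * (2*a) := by
    have := hAest K hKcont hK0 hK1
    rwa [hKaset, ← hA] at this
  have hBq : |B - f t * Q| ≤ M * (h*a) * (2*a) := by
    have := hAest (fun u => (K u)^2) (hKcont.pow 2) hKsq0 hKsq1
    rwa [← hQset, ← hB] at this
  set E1 := ∫ x, K ((t - x) / h) ∂μ with hE1d
  set E2 := ∫ x, (K ((t - x) / h)) ^ 2 ∂μ with hE2d
  have hE1' : E1 = F (t - h*a) + h * A := hE1
  have hE2' : E2 = F (t - h*a) + h * B := hE2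
  have b1 : |E1 - F t| ≤ 3*M*a^2*h^2 := by
    have e : E1 - F t = (F (t - h*a) - F t + h * a * f t) + h * (A - f t * a) := by
      rw [hE1']; ring
    rw [e]
    calc |(F (t - h*a) - F t + h * a * f t) + h * (A - f t * a)|
        ≤ |F (t - h*a) - F t + h * a * f t| + |h * (A - f t * a)| := abs_add_le _ _
      _ ≤ M * a^2 * h^2 + h * (M * (h*a) * (2*a)) := by
          refine add_le_add hT1 ?_
          rw [abs_mul, abs_of_pos hh]
          exact mul_le_mul_of_nonneg_left hAa hh.le
      _ = 3*M*a^2*h^2 := by ring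
  have b2 : |E2 - (F t - h * f t * (a - Q))| ≤ 3*M*a^2*h^2 := by
    have e : E2 - (F t - h * f t * (a - Q))
        = (F (t - h*a) - F t + h * a * f t) + h * (B - f t * Q) := by
      rw [hE2']; ring
    rw [e]
    calc |(F (t - h*a) - F t + h * a * f t) + h * (B - f t * Q)|
        ≤ |F (t - h*a) - F t + h * a * f t| + |h * (B - f t * Q)| := abs_add_le _ _
      _ ≤ M * a^2 * h^2 + h * (M * (h*a) * (2*a)) := by
          refine add_le_add hT1 ?_
          rw [abs_mul, abs_of_pos hh]
          exact mul_le_mul_of_nonneg_left hBq hh.le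
      _ = 3*M*a^2*h^2 := by ring
  -- final combination
  have key : (E2 - E1^2) - (F t * (1 - F t) - h * f t * (a - Q))
      = (E2 - (F t - h * f t * (a - Q))) - (E1 - F t) * ((E1 - F t) + 2 * F t) := by ring
  rw [key]
  have habs2 : |(E1 - F t) + 2 * F t| ≤ 3*M*a^2 + 2 := by
    calc |(E1 - F t) + 2 * F t| ≤ |E1 - F t| + 2 * |F t| := by
          refine le_trans (abs_add_le _ _) ?_
          rw [abs_mul]; simp
      _ ≤ 3*M*a^2 + 2 := by
          have h2 : h^2 ≤ 1 := by nlinarith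
          have h3 : (0:ℝ) ≤ 3*M*a^2 * (1 - h^2) :=
            mul_nonneg (by positivity) (by linarith)
          have : |E1 - F t| ≤ 3*M*a^2 := by nlinarith [b1]
          have hFtabs : |F t| ≤ 1 := abs_le.mpr ⟨by linarith, hFt1⟩
          linarith
  calc |(E2 - (F t - h * f t * (a - Q))) - (E1 - F t) * ((E1 - F t) + 2 * F t)|
      ≤ |E2 - (F t - h * f t * (a - Q))| + |E1 - F t| * |(E1 - F t) + 2 * F t| := by
        refine le_trans (abs_sub _ _) ?_
        rw [abs_mul]
    _ ≤ 3*M*a^2*h^2 + (3*M*a^2*h^2) * (3*M*a^2 + 2) := by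
        refine add_le_add b2 ?_
        refine mul_le_mul b1 habs2 (abs_nonneg _) (by positivity)
    _ ≤ (3*M*a^2 + 3*M*a^2*(3*M*a^2 + 2) + 1) * h^2 := by nlinarith [sq_nonneg h]
end
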